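/- arXiv:1003.1917 — 3 statements merged into one kernel-verified Lean document; each statement's English description precedes it below -/
import Mathlib

section
/- There exists δ > 0 depending only on N such that for every ℓ > 0, Q = (−ℓ,ℓ)², A ∈ ℝ^{N×2}, b ∈ ℝ^N: if ℓ^{−2} ∫_Q dist(Ax+b, ℤ^N) dx ≤ δ, then there exists z ∈ ℤ^N with ∫_Q |Ax+b−z| dx = ∫_Q dist(Ax+b, ℤ^N) dx, i.e., the nearest integer point to the affine map is a.e. a single constant z. -/
set_option maxHeartbeats 1000000

open MeasureTheory

noncomputable section

/-- Euclidean norm of a vector given as a function. -/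
def enorm' {N : ℕ} (v : Fin N → ℝ) : ℝ := Real.sqrt (∑ i, (v i) ^ 2)

/-- Euclidean distance of a vector to the integer lattice `ℤᴺ`. -/
def distZ {N : ℕ} (v : Fin N → ℝ) : ℝ :=
  ⨅ z : Fin N → ℤ, enorm' (fun i => v i - (z i : ℝ))

namespace Stmt8

open Real Set

/-! ### trig bounds -/

lemma cos_le_quartic {t : ℝ} (ht : 0 ≤ t) (ht2 : t ≤ 2) :
    Real.cos t ≤ 1 - t^2/2 + t^4/16 := by
  rcases eq_or_lt_of_le ht with h|h
  · simp [← h]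
  set a := t/2 with ha
  have hta : t = 2*a := by rw [ha]; ring
  have has : 0 < a := by rw [ha]; linarith
  have ha1 : a ≤ 1 := by rw [ha]; linarith
  have ha2 : a^2 ≤ 1 := by nlinarith
  have hsin : a - a^3/4 < Real.sin a := by have := Real.sin_gt_sub_cube has; nlinarith [pow_pos has 3]
  have hpos : (0:ℝ) ≤ a - a^3/4 := by nlinarith [mul_le_mul_of_nonneg_left ha2 has.le]
  have hsq : (a - a^3/4)^2 ≤ Real.sin a ^ 2 := by nlinarith
  have hct : Real.cos t = 1 - 2 * Real.sin a^2 := by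
    have h1 := Real.cos_two_mul a
    have h2 := Real.sin_sq_add_cos_sq a
    rw [hta]; nlinarith
  rw [hct, hta]
  nlinarith [hsq, sq_nonneg (a^3), sq_nonneg a]

lemma sin_le_cubic {x : ℝ} (hx : 0 ≤ x) (hxp : x ≤ Real.pi) :
    Real.sin x ≤ x - x^3/12 := by
  set s := x/2 with hs
  have hs0 : 0 ≤ s := by positivity
  have hsp : s ≤ Real.pi/2 := by rw [hs]; linarith
  have hs2 : s ≤ 2 := by nlinarith [Real.pi_lt_four]
  have hcos0 : 0 ≤ Real.cos s := Real.cos_nonneg_of_mem_Icc ⟨by linarith [Real.pi_pos], hsp⟩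
  have hcosb : Real.cos s ≤ 1 - s^2/2 + s^4/16 := cos_le_quartic hs0 hs2
  have hsins : Real.sin s ≤ s := Real.sin_le hs0
  have hsx : Real.sin x = 2 * Real.sin s * Real.cos s := by
    rw [hs, ← Real.sin_two_mul]; ring_nf
  rw [hsx]
  have h1 : 2 * Real.sin s * Real.cos s ≤ 2 * s * Real.cos s := by nlinarith
  have h2 : 2 * s * Real.cos s ≤ 2 * s * (1 - s^2/2 + s^4/16) := by
    apply mul_le_mul_of_nonneg_left hcosb (by positivity)
  have hspi : s ≤ 1.575 := by nlinarith [Real.pi_lt_d2]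
  have hxs : x = 2 * s := by rw [hs]; ring
  have hs3 : (0:ℝ) ≤ s^3 := by positivity
  have hs25 : s^2 ≤ 2.5 := by nlinarith
  have h5 : s^5 ≤ 2.5 * s^3 := by nlinarith [mul_le_mul_of_nonneg_left hs25 hs3]
  rw [hxs]
  nlinarith [h1, h2, h5]

lemma psi_bound {x : ℝ} (hx : 0 < x) :
    x * min (x^2) 1 ≤ 12 * (x - |Real.sin x|) := by
  rcases le_or_gt x Real.pi with h|h
  · have hsin : |Real.sin x| = Real.sin x :=
      abs_of_nonneg (Real.sin_nonneg_of_nonneg_of_le_pi hx.le h)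
    have := sin_le_cubic hx.le h
    have hmin : min (x^2) 1 ≤ x^2 := min_le_left _ _
    have hxm : 0 ≤ x * (x^2 - min (x^2) 1) := mul_nonneg hx.le (by linarith)
    rw [hsin]
    nlinarith
  · have h1 : |Real.sin x| ≤ 1 := abs_le.mpr ⟨Real.neg_one_le_sin x, Real.sin_le_one x⟩
    have h3 : (3:ℝ) < x := lt_trans Real.pi_gt_three h
    have hmin : min (x^2) 1 ≤ 1 := min_le_right _ _
    have hxm : 0 ≤ x * (1 - min (x^2) 1) := mul_nonneg hx.le (by linarith)
    nlinarith

lemma dist_round_ge (s : ℝ) :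
    (1 - Real.cos (2*π*s))/(2*π) ≤ |s - round s| := by
  set u := s - (round s : ℝ) with hu
  have hcos : Real.cos (2*π*s) = Real.cos (2*π*u) := by
    have h : 2*π*s = 2*π*u + (round s : ℤ) * (2*π) := by
      rw [hu]; ring
    rw [h, Real.cos_add_int_mul_two_pi]
  have hid : Real.cos (2*π*u) = 1 - 2 * Real.sin (π*u)^2 := by
    have h1 := Real.cos_two_mul (π*u)
    have h2 := Real.sin_sq_add_cos_sq (π*u)
    have h3 : 2*π*u = 2*(π*u) := by ring
    rw [h3]; nlinarith
  have hsle : |Real.sin (π*u)| ≤ π * |u| := by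
    calc |Real.sin (π*u)| ≤ |π*u| := Real.abs_sin_le_abs
    _ = π * |u| := by rw [abs_mul, abs_of_pos Real.pi_pos]
  have hs1 : |Real.sin (π*u)| ≤ 1 := abs_le.mpr ⟨Real.neg_one_le_sin _, Real.sin_le_one _⟩
  have hsq : Real.sin (π*u)^2 ≤ |Real.sin (π*u)| := by
    nlinarith [sq_abs (Real.sin (π*u)), abs_nonneg (Real.sin (π*u))]
  rw [hcos, hid, div_le_iff₀ (by positivity)]
  nlinarith [Real.pi_pos]

/-! ### enorm' and distZ lemmas -/

variable {N : ℕ}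

lemma enorm'_nonneg (v : Fin N → ℝ) : 0 ≤ enorm' v := Real.sqrt_nonneg _

lemma enorm'_eq_dist (a c : Fin N → ℝ) :
    enorm' (fun i => a i - c i) =
      dist ((WithLp.equiv 2 (Fin N → ℝ)).symm a) ((WithLp.equiv 2 (Fin N → ℝ)).symm c) := by
  rw [EuclideanSpace.dist_eq]
  unfold enorm'
  congr 1
  refine Finset.sum_congr rfl fun i _ => ?_
  rw [WithLp.equiv_symm_apply, Real.dist_eq]
  rw [sq_abs]

lemma enorm'_sub_le (a b c : Fin N → ℝ) :
    enorm' (fun i => a i - c i) ≤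
      enorm' (fun i => a i - b i) + enorm' (fun i => b i - c i) := by
  rw [enorm'_eq_dist, enorm'_eq_dist, enorm'_eq_dist]
  exact dist_triangle _ _ _

lemma coord_le_enorm' (v : Fin N → ℝ) (i : Fin N) : |v i| ≤ enorm' v := by
  rw [← Real.sqrt_sq_eq_abs]
  exact Real.sqrt_le_sqrt (Finset.single_le_sum (fun j _ => sq_nonneg (v j)) (Finset.mem_univ i))

lemma enorm'_le_sum (v : Fin N → ℝ) : enorm' v ≤ ∑ i, |v i| := by
  rw [show (∑ i, |v i|) = Real.sqrt ((∑ i, |v i|)^2) by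
    rw [Real.sqrt_sq (Finset.sum_nonneg fun i _ => abs_nonneg _)]]
  apply Real.sqrt_le_sqrt
  calc (∑ i, (v i)^2) = ∑ i, |v i|^2 := by simp [sq_abs]
  _ ≤ (∑ i, |v i|)^2 := Finset.sum_sq_le_sq_sum_of_nonneg (fun i _ => abs_nonneg _)

lemma bddBelow_enorm' (v : Fin N → ℝ) :
    BddBelow (Set.range fun z : Fin N → ℤ => enorm' (fun i => v i - (z i : ℝ))) :=
  ⟨0, by rintro _ ⟨z, rfl⟩; exact enorm'_nonneg _⟩

lemma distZ_le (v : Fin N → ℝ) (z : Fin N → ℤ) :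
    distZ v ≤ enorm' (fun i => v i - (z i : ℝ)) :=
  ciInf_le (bddBelow_enorm' v) z

lemma le_distZ (v : Fin N → ℝ) {c : ℝ}
    (h : ∀ z : Fin N → ℤ, c ≤ enorm' (fun i => v i - (z i : ℝ))) : c ≤ distZ v :=
  le_ciInf h

lemma distZ_nonneg (v : Fin N → ℝ) : 0 ≤ distZ v :=
  le_distZ v fun _ => enorm'_nonneg _

lemma one_le_enorm'_int {z z' : Fin N → ℤ} (h : z ≠ z') :
    (1:ℝ) ≤ enorm' (fun i => (z i : ℝ) - (z' i : ℝ)) := by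
  obtain ⟨i, hi⟩ := Function.ne_iff.mp h
  calc (1:ℝ) ≤ |(z i : ℝ) - (z' i : ℝ)| := by
        rw [show ((z i : ℝ) - (z' i : ℝ)) = ((z i - z' i : ℤ) : ℝ) by push_cast; ring]
        rw [← Int.cast_abs]
        exact_mod_cast Int.one_le_abs (sub_ne_zero.mpr hi)
  _ ≤ _ := coord_le_enorm' (fun i => (z i : ℝ) - (z' i : ℝ)) i

lemma distZ_eq_of_lt_half {v : Fin N → ℝ} {z : Fin N → ℤ}
    (h : enorm' (fun i => v i - (z i : ℝ)) < 1/2) :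
    distZ v = enorm' (fun i => v i - (z i : ℝ)) := by
  refine le_antisymm (distZ_le v z) (le_distZ v fun z' => ?_)
  rcases eq_or_ne z' z with rfl | hne
  · exact le_rfl
  · have h1 : (1:ℝ) ≤ enorm' (fun i => (z i : ℝ) - (z' i : ℝ)) := one_le_enorm'_int (Ne.symm hne)
    have h2 := enorm'_sub_le (fun i => (z i : ℝ)) v (fun i => (z' i : ℝ))
    have h3 : enorm' (fun i => (z i : ℝ) - v i) = enorm' (fun i => v i - (z i : ℝ)) := by
      rw [enorm'_eq_dist, enorm'_eq_dist]; exact dist_comm _ _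
    linarith

lemma distZ_eq_round (v : Fin N → ℝ) :
    distZ v = enorm' (fun i => v i - (round (v i) : ℝ)) := by
  refine le_antisymm (distZ_le v _) (le_distZ v fun z => ?_)
  unfold enorm'
  apply Real.sqrt_le_sqrt
  refine Finset.sum_le_sum fun i _ => ?_
  rw [← sq_abs (v i - _), ← sq_abs (v i - (z i : ℝ))]
  apply pow_le_pow_left₀ (abs_nonneg _) (round_le (v i) (z i))

lemma round_coord_le_distZ (v : Fin N → ℝ) (i : Fin N) :
    |v i - (round (v i) : ℝ)| ≤ distZ v :=
  le_distZ v fun z => (round_le (v i) (z i)).trans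
    (coord_le_enorm' (fun j => v j - (z j : ℝ)) i)

lemma distZ_le_distZ_add (v w : Fin N → ℝ) :
    distZ v ≤ distZ w + enorm' (fun i => v i - w i) := by
  rw [← sub_le_iff_le_add]
  apply le_distZ
  intro z
  linarith [distZ_le v z, enorm'_sub_le v w (fun i => (z i : ℝ))]

lemma lipschitz_distZ : LipschitzWith (N : NNReal) (distZ (N := N)) := by
  apply LipschitzWith.of_dist_le_mul
  intro v w
  rw [Real.dist_eq]
  have key : ∀ v w : Fin N → ℝ, distZ v - distZ w ≤ (N:ℝ) * dist v w := by
    intro v w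
    have h1 := distZ_le_distZ_add v w
    have h2 : enorm' (fun i => v i - w i) ≤ ∑ i : Fin N, |v i - w i| := enorm'_le_sum _
    have h3 : (∑ i : Fin N, |v i - w i|) ≤ (N:ℝ) * dist v w := by
      calc (∑ i : Fin N, |v i - w i|) ≤ ∑ _i : Fin N, dist v w :=
            Finset.sum_le_sum fun i _ => by
              rw [← Real.dist_eq]; exact dist_le_pi_dist v w i
      _ = (N:ℝ) * dist v w := by
        rw [Finset.sum_const, Finset.card_univ, Fintype.card_fin, nsmul_eq_mul]
    linarith
  have hc : ((N : NNReal) : ℝ) = (N : ℝ) := by simp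
  rw [hc, abs_sub_le_iff]
  refine ⟨key v w, ?_⟩
  have := key w v
  rwa [dist_comm w v] at this

/-! ### integral bounds on squares -/

lemma integrableOn_sq {f : ℝ×ℝ → ℝ} (hf : Continuous f) (ℓ : ℝ) :
    IntegrableOn f (Ioo (-ℓ) ℓ ×ˢ Ioo (-ℓ) ℓ) volume := by
  have : IntegrableOn f (Icc (-ℓ) ℓ ×ˢ Icc (-ℓ) ℓ) volume :=
    hf.continuousOn.integrableOn_compact (isCompact_Icc.prod isCompact_Icc)
  exact this.mono_set (prod_mono Ioo_subset_Icc_self Ioo_subset_Icc_self)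

lemma integrableOn_Ioo1 {f : ℝ → ℝ} (hf : Continuous f) (ℓ : ℝ) :
    IntegrableOn f (Ioo (-ℓ) ℓ) volume :=
  hf.integrableOn_Icc.mono_set Ioo_subset_Icc_self

lemma inner_cos_integral (a c ℓ : ℝ) (hl : 0 < ℓ) (ha : a ≠ 0) :
    ∫ y in Ioo (-ℓ) ℓ, (1 - Real.cos (2*π*a*y + c))/(2*π)
      = (2*ℓ - Real.cos c * (Real.sin (2*π*a*ℓ) / (π*a)))/(2*π) := by
  rw [← integral_Ioc_eq_integral_Ioo, ← intervalIntegral.integral_of_le (by linarith : -ℓ ≤ ℓ)]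
  have hC : 2*π*a ≠ 0 := by
    have := Real.pi_ne_zero; positivity
  have h1 : (∫ y in (-ℓ)..ℓ, (1 - Real.cos (2*π*a*y + c)))
      = 2*ℓ - (2*π*a)⁻¹ * (2 * Real.sin (2*π*a*ℓ) * Real.cos c) := by
    rw [intervalIntegral.integral_sub intervalIntegrable_const
      (Continuous.intervalIntegrable (by continuity) _ _)]
    have h2 : (∫ y in (-ℓ)..ℓ, Real.cos (2*π*a*y + c))
        = (2*π*a)⁻¹ • ∫ t in (2*π*a*(-ℓ)+c)..(2*π*a*ℓ+c), Real.cos t := by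
      have := intervalIntegral.integral_comp_mul_add Real.cos hC c (a := -ℓ) (b := ℓ)
      simpa using this
    rw [h2, integral_cos]
    have h3 : Real.sin (2*π*a*ℓ+c) - Real.sin (2*π*a*(-ℓ)+c)
        = 2 * Real.sin (2*π*a*ℓ) * Real.cos c := by
      rw [Real.sin_sub_sin]; ring_nf
    rw [h3]
    simp [intervalIntegral.integral_const]
    ring
  calc (∫ y in (-ℓ)..ℓ, (1 - Real.cos (2*π*a*y + c))/(2*π))
      = (∫ y in (-ℓ)..ℓ, (1 - Real.cos (2*π*a*y + c)))/(2*π) := by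
        rw [intervalIntegral.integral_div]
  _ = (2*ℓ - Real.cos c * (Real.sin (2*π*a*ℓ) / (π*a)))/(2*π) := by
        rw [h1]; congr 1; field_simp

lemma sq_int_bound {ℓ a u c : ℝ} (hl : 0 < ℓ) (ha : a ≠ 0) {f : ℝ×ℝ → ℝ} (hf : Continuous f)
    (hbd : ∀ p : ℝ×ℝ, (1 - Real.cos (2*π*(u*p.1 + a*p.2 + c)))/(2*π) ≤ f p) :
    2*ℓ * ((2*ℓ - |Real.sin (2*π*a*ℓ)|/(π*|a|))/(2*π))
      ≤ ∫ p in Ioo (-ℓ) ℓ ×ˢ Ioo (-ℓ) ℓ, f p := by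
  set G : ℝ×ℝ → ℝ := fun p => (1 - Real.cos (2*π*(u*p.1 + a*p.2 + c)))/(2*π) with hG
  have hGc : Continuous G := by
    apply Continuous.div_const
    exact (continuous_const.sub ((Real.continuous_cos).comp (by continuity)))
  have hmono : (∫ p in Ioo (-ℓ) ℓ ×ˢ Ioo (-ℓ) ℓ, G p) ≤ ∫ p in Ioo (-ℓ) ℓ ×ˢ Ioo (-ℓ) ℓ, f p :=
    setIntegral_mono_on (integrableOn_sq hGc ℓ) (integrableOn_sq hf ℓ)
      ((measurableSet_Ioo).prod measurableSet_Ioo) (fun p _ => hbd p)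
  set h : ℝ → ℝ := fun x => (2*ℓ - Real.cos (2*π*(u*x+c)) * (Real.sin (2*π*a*ℓ) / (π*a)))/(2*π)
    with hh
  have hcomp : (∫ p in Ioo (-ℓ) ℓ ×ˢ Ioo (-ℓ) ℓ, G p) = ∫ x in Ioo (-ℓ) ℓ, h x := by
    rw [Measure.volume_eq_prod, setIntegral_prod _ (by
      rw [← Measure.volume_eq_prod]; exact integrableOn_sq hGc ℓ)]
    refine setIntegral_congr_fun measurableSet_Ioo fun x _ => ?_
    have : ∀ y : ℝ, G (x, y) = (1 - Real.cos (2*π*a*y + 2*π*(u*x+c)))/(2*π) := by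
      intro y; rw [hG]; ring_nf
    simp_rw [this]
    rw [inner_cos_integral a (2*π*(u*x+c)) ℓ hl ha, hh]
  have hβ : ∀ x ∈ Ioo (-ℓ) ℓ, (2*ℓ - |Real.sin (2*π*a*ℓ)|/(π*|a|))/(2*π) ≤ h x := by
    intro x _
    show _ ≤ (2*ℓ - Real.cos (2*π*(u*x+c)) * (Real.sin (2*π*a*ℓ) / (π*a)))/(2*π)
    gcongr (2*ℓ - ?_)/(2*π)
    calc Real.cos (2*π*(u*x+c)) * (Real.sin (2*π*a*ℓ) / (π*a))
        ≤ |Real.cos (2*π*(u*x+c)) * (Real.sin (2*π*a*ℓ) / (π*a))| := le_abs_self _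
    _ = |Real.cos (2*π*(u*x+c))| * (|Real.sin (2*π*a*ℓ)| / (π*|a|)) := by
        rw [abs_mul, abs_div, abs_mul, abs_of_pos Real.pi_pos]
    _ ≤ 1 * (|Real.sin (2*π*a*ℓ)| / (π*|a|)) := by
        apply mul_le_mul_of_nonneg_right (Real.abs_cos_le_one _) (by positivity)
    _ = |Real.sin (2*π*a*ℓ)| / (π*|a|) := one_mul _
  have hhc : Continuous h := by
    apply Continuous.div_const
    exact continuous_const.sub (((Real.continuous_cos).comp (by continuity)).mul continuous_const)
  have hconst : (∫ _ in Ioo (-ℓ) ℓ, (2*ℓ - |Real.sin (2*π*a*ℓ)|/(π*|a|))/(2*π) ∂(volume : Measure ℝ))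
      = 2*ℓ * ((2*ℓ - |Real.sin (2*π*a*ℓ)|/(π*|a|))/(2*π)) := by
    rw [setIntegral_const, measureReal_def, Real.volume_Ioo, ENNReal.toReal_ofReal (by linarith), smul_eq_mul]
    ring_nf
  have hmono2 : (∫ _ in Ioo (-ℓ) ℓ, (2*ℓ - |Real.sin (2*π*a*ℓ)|/(π*|a|))/(2*π) ∂(volume : Measure ℝ))
      ≤ ∫ x in Ioo (-ℓ) ℓ, h x := by
    refine setIntegral_mono_on ?_ (integrableOn_Ioo1 hhc ℓ) measurableSet_Ioo hβ
    exact integrableOn_const (by rw [Real.volume_Ioo]; exact ENNReal.ofReal_ne_top)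
  rw [← hconst]
  rw [← hcomp] at hmono2
  linarith

end Stmt8

open Stmt8 Real Set

/-- there is `δ > 0` depending only on `N` such that for every square
`Q = (-ℓ,ℓ)²` and affine map `x ↦ Ax + b`, if `ℓ⁻² ∫_Q dist(Ax+b, ℤᴺ) ≤ δ` then the distance is
realized by a single lattice point `z ∈ ℤᴺ` on all of `Q`. -/
theorem stmt8 (N : ℕ) (hN : 1 ≤ N) :
    ∃ δ > 0, ∀ ℓ : ℝ, 0 < ℓ → ∀ (A : Matrix (Fin N) (Fin 2) ℝ) (b : Fin N → ℝ),
      (ℓ ^ 2)⁻¹ *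
          (∫ x in {x : EuclideanSpace ℝ (Fin 2) | ∀ i, |x i| < ℓ},
            distZ (fun i => A.mulVec (fun j => x j) i + b i)) ≤ δ →
      ∃ z : Fin N → ℤ,
        (∫ x in {x : EuclideanSpace ℝ (Fin 2) | ∀ i, |x i| < ℓ},
            enorm' (fun i => A.mulVec (fun j => x j) i + b i - (z i : ℝ))) =
        ∫ x in {x : EuclideanSpace ℝ (Fin 2) | ∀ i, |x i| < ℓ},
          distZ (fun i => A.mulVec (fun j => x j) i + b i) := by
  have hM1 : (1:ℝ) ≤ (N:ℝ) := by exact_mod_cast hN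
  set M : ℝ := (N:ℝ) with hM
  set δ : ℝ := 1/(200*M^2) with hδ
  have hδpos : 0 < δ := by rw [hδ]; positivity
  refine ⟨δ, hδpos, ?_⟩
  intro ℓ hl A b hyp
  set w : ℝ×ℝ → Fin N → ℝ := fun p i => A i 0 * p.1 + A i 1 * p.2 + b i with hw
  set sq : Set (ℝ×ℝ) := Ioo (-ℓ) ℓ ×ˢ Ioo (-ℓ) ℓ with hsq
  have hsqmeas : MeasurableSet sq := (measurableSet_Ioo).prod measurableSet_Ioo
  have hwc : Continuous w := by
    apply continuous_pi
    intro i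
    continuity
  have hfc : Continuous fun p => distZ (w p) := (lipschitz_distZ).continuous.comp hwc
  set J : ℝ := ∫ p in sq, distZ (w p) with hJdef
  -- transport from EuclideanSpace to ℝ×ℝ
  have hS1meas : MeasurableSet {y : Fin 2 → ℝ | ∀ i, |y i| < ℓ} := by
    rw [Set.setOf_forall]
    exact MeasurableSet.iInter fun i =>
      measurableSet_lt ((measurable_pi_apply i).abs) measurable_const
  have hIJ : (∫ x in {x : EuclideanSpace ℝ (Fin 2) | ∀ i, |x i| < ℓ},
      distZ (fun i => A.mulVec (fun j => x j) i + b i)) = J := by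
    have hpre1 : {x : EuclideanSpace ℝ (Fin 2) | ∀ i, |x i| < ℓ}
        = (MeasurableEquiv.toLp 2 (Fin 2 → ℝ)).symm ⁻¹' {y : Fin 2 → ℝ | ∀ i, |y i| < ℓ} := by
      ext x
      simp [MeasurableEquiv.coe_toLp_symm]
    have step1 : (∫ x in {x : EuclideanSpace ℝ (Fin 2) | ∀ i, |x i| < ℓ},
        distZ (fun i => A.mulVec (fun j => x j) i + b i))
        = ∫ y in {y : Fin 2 → ℝ | ∀ i, |y i| < ℓ},
            distZ (fun i => A.mulVec y i + b i) := by
      rw [hpre1]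
      exact (EuclideanSpace.volume_preserving_symm_measurableEquiv_toLp (Fin 2)).setIntegral_preimage_emb
        (MeasurableEquiv.measurableEmbedding _)
        (fun y => distZ (fun i => A.mulVec y i + b i)) _
    have hpre2 : {y : Fin 2 → ℝ | ∀ i, |y i| < ℓ}
        = (MeasurableEquiv.piFinTwo (fun _ : Fin 2 => ℝ)) ⁻¹' sq := by
      ext y
      simp only [Set.mem_setOf_eq, Set.mem_preimage, MeasurableEquiv.piFinTwo_apply, hsq,
        Set.mem_prod, Set.mem_Ioo, Fin.forall_fin_two, abs_lt]
    have step2 : (∫ y in {y : Fin 2 → ℝ | ∀ i, |y i| < ℓ},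
        distZ (fun i => A.mulVec y i + b i)) = J := by
      rw [hpre2, hJdef]
      rw [← (volume_preserving_piFinTwo (fun _ : Fin 2 => ℝ)).setIntegral_preimage_emb
        (MeasurableEquiv.measurableEmbedding _) (fun p => distZ (w p)) sq]
      refine setIntegral_congr_fun (hpre2 ▸ hS1meas) fun y _ => ?_
      congr 1
      funext i
      simp [Matrix.mulVec, dotProduct, Fin.sum_univ_two, hw,
        MeasurableEquiv.piFinTwo_apply]
    rw [step1, step2]
  have hl2 : (0:ℝ) < ℓ^2 := by positivity
  have hJδ : J ≤ δ * ℓ^2 := by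
    rw [hIJ] at hyp
    rw [inv_mul_le_iff₀ hl2] at hyp
    linarith
  -- the key per-entry bound
  have alg : ∀ a : ℝ, a ≠ 0 →
      2*ℓ*((2*ℓ - |Real.sin (2*π*a*ℓ)|/(π*|a|))/(2*π)) ≤ J → ℓ * |a| ≤ 1/(15*M) := by
    intro a ha hL
    set x : ℝ := 2*π*ℓ*|a| with hx
    have hapos : 0 < |a| := abs_pos.mpr ha
    have hx0 : 0 < x := by rw [hx]; positivity
    have habs : |Real.sin (2*π*a*ℓ)| = |Real.sin x| := by
      rcases abs_cases a with ⟨h1,_⟩|⟨h1,_⟩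
      · rw [show 2*π*a*ℓ = x by rw [hx, h1]; ring]
      · rw [show 2*π*a*ℓ = -x by rw [hx, h1]; ring, Real.sin_neg, abs_neg]
    have hψ := psi_bound hx0
    have hπa : π*|a| = x/(2*ℓ) := by rw [hx]; field_simp
    have hLHS : 2*ℓ*((2*ℓ - |Real.sin (2*π*a*ℓ)|/(π*|a|))/(2*π))
        = (2*ℓ^2/π)*(1 - |Real.sin x|/x) := by
      rw [habs, hπa]
      rw [div_div_eq_mul_div]
      field_simp
    have hm : min (x^2) 1 / 12 ≤ 1 - |Real.sin x|/x := by
      have heq : 1 - |Real.sin x|/x = (x - |Real.sin x|)/x := by field_simp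
      rw [heq, div_le_div_iff₀ (by norm_num) hx0]
      nlinarith
    have h2 : (2*ℓ^2/π)*(1 - |Real.sin x|/x) ≤ δ*ℓ^2 := by
      rw [← hLHS]; linarith
    have h1 : (2*ℓ^2/π)*(min (x^2) 1/12) ≤ (2*ℓ^2/π)*(1 - |Real.sin x|/x) :=
      mul_le_mul_of_nonneg_left hm (by positivity)
    have hJb : ℓ^2 * (min (x^2) 1) ≤ 6*π*(δ*ℓ^2) := by
      have h3 : ℓ^2 * min (x^2) 1 = 6*π*((2*ℓ^2/π)*(min (x^2) 1/12)) := by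
        field_simp; ring
      rw [h3]
      apply mul_le_mul_of_nonneg_left (h1.trans h2) (by positivity)
    have hmin24 : min (x^2) 1 ≤ 24 * δ := by
      have hπ4 := Real.pi_le_four
      have h5 : 6*π*(δ*ℓ^2) ≤ 24*(δ*ℓ^2) := by nlinarith [mul_nonneg hδpos.le hl2.le]
      have h4 : ℓ^2 * min (x^2) 1 ≤ ℓ^2 * (24*δ) := by nlinarith
      exact le_of_mul_le_mul_left h4 hl2
    have hδlt : 24*δ < 1 := by
      rw [hδ, show (24:ℝ)*(1/(200*M^2)) = 24/(200*M^2) by ring,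
        div_lt_iff₀ (by positivity)]
      nlinarith
    have hxx : x^2 ≤ 24*δ := by
      rcases min_cases (x^2) 1 with ⟨h1',_⟩|⟨h1',_⟩
      · rw [h1'] at hmin24; exact hmin24
      · rw [h1'] at hmin24; linarith
    -- now x ≤ 2/(5M), hence ℓ|a| = x/(2π) ≤ x/6 ≤ 1/(15M)
    have hMpos : (0:ℝ) < M := by linarith
    have h200 : x^2 * (200*M^2) ≤ 24 := by
      have : (24:ℝ)*δ = 24/(200*M^2) := by rw [hδ]; ring
      rw [this] at hxx
      rw [← le_div_iff₀ (by positivity)]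
      exact hxx
    have hx5 : x ≤ 2/(5*M) := by
      rw [le_div_iff₀ (by positivity)]
      nlinarith [sq_nonneg (M*x - 0.35), h200, hx0.le, hMpos]
    have hla : ℓ*|a| = x/(2*π) := by rw [hx]; field_simp
    rw [hla]
    have hπ3 := Real.pi_gt_three
    rw [div_le_div_iff₀ (by positivity) (by positivity)]
    calc x * (15*M) ≤ (2/(5*M)) * (15*M) := by
          apply mul_le_mul_of_nonneg_right hx5 (by positivity)
    _ = 6 := by field_simp; ring
    _ ≤ 1 * (2*π) := by linarith
  have key : ∀ (i : Fin N) (j : Fin 2), ℓ * |A i j| ≤ 1/(15*M) := by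
    intro i j
    rcases eq_or_ne (A i j) 0 with h0 | h0
    · rw [h0, abs_zero, mul_zero]
      positivity
    fin_cases j
    · -- j = 0 : use swap
      apply alg (A i 0) h0
      have hswap : (∫ q in sq, distZ (w (q.2, q.1))) = J := by
        have hsq' : Prod.swap ⁻¹' sq = sq := by
          ext q
          simp only [hsq, Set.mem_preimage, Set.mem_prod, Prod.fst_swap, Prod.snd_swap]
          tauto
        rw [hJdef, Measure.volume_eq_prod]
        rw [← Measure.measurePreserving_swap.setIntegral_preimage_emb
          (MeasurableEquiv.prodComm : ℝ×ℝ ≃ᵐ ℝ×ℝ).measurableEmbedding (fun p => distZ (w p)) sq]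
        rw [hsq']
        rfl
      rw [← hswap]
      apply sq_int_bound hl h0 (f := fun q => distZ (w (q.2, q.1)))
      · exact hfc.comp (by continuity)
      · intro q
        have hwq : w (q.2, q.1) i = A i 1 * q.1 + A i 0 * q.2 + b i := by
          rw [hw]; ring
        calc (1 - Real.cos (2*π*(A i 1 * q.1 + A i 0 * q.2 + b i)))/(2*π)
            ≤ |(A i 1 * q.1 + A i 0 * q.2 + b i)
                - round (A i 1 * q.1 + A i 0 * q.2 + b i)| := dist_round_ge _
        _ = |w (q.2, q.1) i - round (w (q.2, q.1) i)| := by rw [hwq]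
        _ ≤ distZ (w (q.2, q.1)) := round_coord_le_distZ _ i
    · -- j = 1 : direct
      apply alg (A i 1) h0
      rw [hJdef]
      apply sq_int_bound hl h0 (f := fun p => distZ (w p)) hfc
      intro p
      calc (1 - Real.cos (2*π*(A i 0 * p.1 + A i 1 * p.2 + b i)))/(2*π)
          ≤ |(A i 0 * p.1 + A i 1 * p.2 + b i)
              - round (A i 0 * p.1 + A i 1 * p.2 + b i)| := dist_round_ge _
      _ = |w p i - round (w p i)| := by rw [hw]
      _ ≤ distZ (w p) := round_coord_le_distZ _ i
  -- bound on linear part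
  have rbound : ∀ s t : ℝ, |s| ≤ ℓ → |t| ≤ ℓ →
      enorm' (fun i => A i 0 * s + A i 1 * t) ≤ 2/15 := by
    intro s t hs ht
    have hMpos : (0:ℝ) < M := by linarith
    calc enorm' (fun i => A i 0 * s + A i 1 * t) ≤ ∑ i, |A i 0 * s + A i 1 * t| :=
          enorm'_le_sum _
    _ ≤ ∑ _i : Fin N, (2/(15*M)) := by
        refine Finset.sum_le_sum fun i _ => ?_
        have hterm0 : |A i 0| * |s| ≤ 1/(15*M) := by
          calc |A i 0| * |s| ≤ |A i 0| * ℓ := mul_le_mul_of_nonneg_left hs (abs_nonneg _)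
          _ = ℓ * |A i 0| := mul_comm _ _
          _ ≤ 1/(15*M) := key i 0
        have hterm1 : |A i 1| * |t| ≤ 1/(15*M) := by
          calc |A i 1| * |t| ≤ |A i 1| * ℓ := mul_le_mul_of_nonneg_left ht (abs_nonneg _)
          _ = ℓ * |A i 1| := mul_comm _ _
          _ ≤ 1/(15*M) := key i 1
        calc |A i 0 * s + A i 1 * t| ≤ |A i 0 * s| + |A i 1 * t| := abs_add_le _ _
        _ = |A i 0| * |s| + |A i 1| * |t| := by rw [abs_mul, abs_mul]
        _ ≤ 1/(15*M) + 1/(15*M) := add_le_add hterm0 hterm1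
        _ = 2/(15*M) := by ring
    _ = 2/15 := by
        rw [Finset.sum_const, Finset.card_univ, Fintype.card_fin, nsmul_eq_mul, hM]
        field_simp
  -- distZ b is small
  have hb : distZ b ≤ 2/15 + δ/4 := by
    have hzp : ∀ p ∈ sq, distZ b - 2/15 ≤ distZ (w p) := by
      intro p hp
      have h1 := distZ_le_distZ_add b (w p)
      have h2 : (fun i => b i - w p i) = (fun i => A i 0 * (-p.1) + A i 1 * (-p.2)) := by
        funext i; rw [hw]; ring
      obtain ⟨hp1, hp2⟩ := hp
      have h3 : enorm' (fun i => A i 0 * (-p.1) + A i 1 * (-p.2)) ≤ 2/15 := by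
        apply rbound
        · rw [abs_neg]; exact (abs_lt.mpr ⟨hp1.1, hp1.2⟩).le
        · rw [abs_neg]; exact (abs_lt.mpr ⟨hp2.1, hp2.2⟩).le
      rw [h2] at h1
      linarith
    have hvol : (volume sq).toReal = 4*ℓ^2 := by
      rw [hsq, Measure.volume_eq_prod, Measure.prod_prod, Real.volume_Ioo,
        ← ENNReal.ofReal_mul (by linarith)]
      rw [ENNReal.toReal_ofReal (by nlinarith)]
      ring_nf
    have hci : IntegrableOn (fun _ : ℝ×ℝ => distZ b - 2/15) sq volume := by
      refine integrableOn_const ?_ enorm_ne_top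
      rw [hsq, Measure.volume_eq_prod, Measure.prod_prod, Real.volume_Ioo]
      exact (ENNReal.mul_lt_top ENNReal.ofReal_lt_top ENNReal.ofReal_lt_top).ne
    have hmono := setIntegral_mono_on hci (integrableOn_sq hfc ℓ) hsqmeas hzp
    rw [setIntegral_const, measureReal_def, hvol, smul_eq_mul] at hmono
    rw [← hJdef] at hmono
    nlinarith
  -- conclusion
  refine ⟨fun i => round (b i), ?_⟩
  have hSmeas : MeasurableSet {x : EuclideanSpace ℝ (Fin 2) | ∀ i, |x i| < ℓ} := by
    rw [Set.setOf_forall]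
    exact MeasurableSet.iInter fun i =>
      measurableSet_lt (((measurable_pi_apply i).comp
        (MeasurableEquiv.toLp 2 (Fin 2 → ℝ)).symm.measurable).abs) measurable_const
  apply setIntegral_congr_fun hSmeas
  intro x hx
  have hδle : δ ≤ 1/200 := by
    rw [hδ]
    rw [div_le_div_iff₀ (by positivity) (by norm_num)]
    nlinarith
  have hgb : (fun i => (A.mulVec (fun j => x j) i + b i) - b i)
      = fun i => A i 0 * (x 0) + A i 1 * (x 1) := by
    funext i
    simp [Matrix.mulVec, dotProduct, Fin.sum_univ_two]
  have h1 : enorm' (fun i => A.mulVec (fun j => x j) i + b i - (round (b i) : ℝ))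
      ≤ enorm' (fun i => (A.mulVec (fun j => x j) i + b i) - b i)
        + enorm' (fun i => b i - (round (b i) : ℝ)) :=
    enorm'_sub_le _ b _
  have h2 : enorm' (fun i => b i - (round (b i) : ℝ)) = distZ b := (distZ_eq_round b).symm
  have h3 : enorm' (fun i => A i 0 * (x 0) + A i 1 * (x 1)) ≤ 2/15 :=
    rbound (x 0) (x 1) (hx 0).le (hx 1).le
  rw [hgb] at h1
  rw [h2] at h1
  have hlt : enorm' (fun i => A.mulVec (fun j => x j) i + b i - (round (b i) : ℝ)) < 1/2 := by
    calc enorm' (fun i => A.mulVec (fun j => x j) i + b i - (round (b i) : ℝ))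
        ≤ 2/15 + distZ b := by linarith
    _ ≤ 2/15 + (2/15 + δ/4) := by linarith
    _ < 1/2 := by linarith
  exact (distZ_eq_of_lt_half hlt).symm
end
end

section
/- Let ℓ > 0, ν ∈ S¹, Q*_ν = {x ∈ ℝ² : |x·ν| ≤ ℓ, |x·ν^⊥| ≤ ℓ/2}, Q_ν = {x : |x·ν| ≤ ℓ/2, |x·ν^⊥| ≤ ℓ/2}, and u ∈ W^{1,1}(Q*_ν; ℝ). Set η = ∫_{Q*_ν} (|∂_{ν^⊥} u| + (∂_ν u)_−) dx. Then there exists a nondecreasing function h : ℝ → ℝ such that ∫_{Q_ν} |u(x) − h(x·ν)|² dx ≤ C η |Du|(Q*_ν), and moreover ‖h(x·ν) − h̄‖_{L^∞(Q_ν)} ≤ (1/ℓ)|Du|(Q*_ν) for some constant h̄ ∈ ℝ. -/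
open MeasureTheory Set
open scoped RealInnerProductSpace

set_option maxHeartbeats 2000000

noncomputable section

/-- Markov-type selection: choose a good point with small value. -/
lemma markov_sel (α β : ℝ) (hαβ : α < β) (V : ℝ → ℝ)
    (hVint : IntegrableOn V (Icc α β)) (hV0 : ∀ t, 0 ≤ V t)
    (G : ℝ → Prop) (hG : ∀ᵐ t ∂(volume.restrict (Icc α β)), G t) :
    ∃ t' ∈ Icc α β, G t' ∧ V t' ≤ 2 * (β - α)⁻¹ * ∫ t in Icc α β, V t := by
  set m := ∫ t in Icc α β, V t with hm
  have hm0 : 0 ≤ m := setIntegral_nonneg measurableSet_Icc fun t _ => hV0 t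
  by_contra hcon
  push_neg at hcon
  set K := 2 * (β - α)⁻¹ * m with hK
  have hae : ∀ᵐ t ∂(volume.restrict (Icc α β)), K < V t := by
    filter_upwards [hG, ae_restrict_mem measurableSet_Icc] with t hGt htmem
    exact hcon t htmem hGt
  have hles : ∀ᵐ t ∂(volume.restrict (Icc α β)), K ≤ V t :=
    hae.mono fun t ht => ht.le
  have hKint : Integrable (fun _ : ℝ => K) (volume.restrict (Icc α β)) := by
    refine integrableOn_const ?_
    rw [Real.volume_Icc]; exact ENNReal.ofReal_ne_top
  have hKm : K * (β - α) ≤ m := by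
    have := integral_mono_ae hKint hVint hles
    rwa [setIntegral_const, measureReal_def, Real.volume_Icc, ENNReal.toReal_ofReal (by linarith), smul_eq_mul,
      mul_comm] at this
  have hbne : β - α ≠ 0 := sub_ne_zero.2 (ne_of_gt hαβ)
  have hKval : K * (β - α) = 2 * m := by
    rw [hK]
    field_simp
  have hm_zero : m = 0 := by nlinarith
  have hKzero : K = 0 := by rw [hK, hm_zero]; ring
  have hV_zero : (fun t => V t) =ᵐ[volume.restrict (Icc α β)] 0 := by
    refine (integral_eq_zero_iff_of_nonneg_ae ?_ hVint).1 ?_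
    · exact Filter.Eventually.of_forall fun t => hV0 t
    · rw [← hm, hm_zero]
  have hne : (volume.restrict (Icc α β)) ≠ 0 := by
    intro h0
    have : (volume.restrict (Icc α β)) (Icc α β) = 0 := by rw [h0]; rfl
    rw [Measure.restrict_apply_self, Real.volume_Icc] at this
    exact absurd this (by simp [ENNReal.ofReal_eq_zero]; linarith)
  have hnb : (ae (volume.restrict (Icc α β))).NeBot := ae_neBot.2 hne
  obtain ⟨t, h1, h2⟩ := (hae.and hV_zero).exists
  simp only at h2
  rw [h2, hKzero] at h1
  exact lt_irrefl 0 h1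


lemma key (ℓ : ℝ) (hℓ : 0 < ℓ)
    (v : ℝ × ℝ → ℝ) (Dv : ℝ × ℝ → (ℝ × ℝ →L[ℝ] ℝ)) (w : ℝ × ℝ → ℝ)
    (hder : ∀ p ∈ Icc (-ℓ) ℓ ×ˢ Icc (-(ℓ/2)) (ℓ/2), HasFDerivAt v (Dv p) p)
    (hw1 : ∀ p ∈ Icc (-ℓ) ℓ ×ˢ Icc (-(ℓ/2)) (ℓ/2), |Dv p (1,0)| ≤ w p)
    (hw2 : ∀ p ∈ Icc (-ℓ) ℓ ×ˢ Icc (-(ℓ/2)) (ℓ/2), |Dv p (0,1)| ≤ w p)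
    (hwint : IntegrableOn w (Icc (-ℓ) ℓ ×ˢ Icc (-(ℓ/2)) (ℓ/2))) :
    ∃ h : ℝ → ℝ, Monotone h ∧
      (∫ p in Icc (-(ℓ/2)) (ℓ/2) ×ˢ Icc (-(ℓ/2)) (ℓ/2), (v p - h p.1)^2) ≤
        100 * (∫ p in Icc (-ℓ) ℓ ×ˢ Icc (-(ℓ/2)) (ℓ/2),
            (|Dv p (0,1)| + max (-(Dv p (1,0))) 0)) *
          (∫ p in Icc (-ℓ) ℓ ×ˢ Icc (-(ℓ/2)) (ℓ/2), w p) ∧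
      ∃ hbar : ℝ, ∀ t ∈ Icc (-(ℓ/2)) (ℓ/2), |h t - hbar| ≤
        ℓ⁻¹ * ∫ p in Icc (-ℓ) ℓ ×ˢ Icc (-(ℓ/2)) (ℓ/2), w p := by
  have hl2 : 0 < ℓ/2 := by linarith
  set I : Set ℝ := Icc (-ℓ) ℓ with hIdef
  set J : Set ℝ := Icc (-(ℓ/2)) (ℓ/2) with hJdef
  have hJI : J ⊆ I := Icc_subset_Icc (by linarith) (by linarith)
  have mI : MeasurableSet I := measurableSet_Icc
  have mJ : MeasurableSet J := measurableSet_Icc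
  have hvolJ : (volume J).toReal = ℓ := by
    rw [hJdef, Real.volume_Icc, ENNReal.toReal_ofReal (by linarith)]
    ring
  -- measurable representatives of the partial derivatives
  set a : ℝ × ℝ → ℝ := fun p => fderiv ℝ v p (1,0) with hadef
  set b : ℝ × ℝ → ℝ := fun p => fderiv ℝ v p (0,1) with hbdef
  set am : ℝ × ℝ → ℝ := fun p => max (-(a p)) 0 with hamdef
  have ha_eq : ∀ p ∈ I ×ˢ J, a p = Dv p (1,0) := by
    intro p hp; rw [hadef]; simp only; rw [(hder p hp).fderiv]
  have hb_eq : ∀ p ∈ I ×ˢ J, b p = Dv p (0,1) := by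
    intro p hp; rw [hbdef]; simp only; rw [(hder p hp).fderiv]
  have hma : Measurable a := (measurable_fderiv_apply_const ℝ v (1,0))
  have hmb : Measurable b := (measurable_fderiv_apply_const ℝ v (0,1))
  have hmam : Measurable am := (hma.neg.max measurable_const)
  have hw0 : ∀ p ∈ I ×ˢ J, 0 ≤ w p := fun p hp => le_trans (abs_nonneg _) (hw1 p hp)
  have ham0 : ∀ p, 0 ≤ am p := fun p => le_max_right _ _
  have ha_le : ∀ p ∈ I ×ˢ J, |a p| ≤ w p := by
    intro p hp; rw [ha_eq p hp]; exact hw1 p hp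
  have hb_le : ∀ p ∈ I ×ˢ J, |b p| ≤ w p := by
    intro p hp; rw [hb_eq p hp]; exact hw2 p hp
  have ham_le : ∀ p ∈ I ×ˢ J, am p ≤ w p := by
    intro p hp
    refine max_le ?_ (hw0 p hp)
    calc -(a p) ≤ |a p| := neg_le_abs _
    _ ≤ w p := ha_le p hp
  -- slice integrability helper
  have hsliceH : ∀ s ∈ J, IntegrableOn (fun τ => w (τ, s)) I →
      ∀ (f : ℝ × ℝ → ℝ), Measurable f → (∀ p ∈ I ×ˢ J, |f p| ≤ w p) →
      IntegrableOn (fun τ => f (τ, s)) I := by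
    intro s hs hints f hf hfle
    refine Integrable.mono hints
      ((hf.comp (measurable_id.prodMk measurable_const)).aestronglyMeasurable.restrict) ?_
    filter_upwards [ae_restrict_mem mI] with τ hτ
    rw [Real.norm_eq_abs, Real.norm_eq_abs, abs_of_nonneg (hw0 _ ⟨hτ, hs⟩)]
    exact hfle _ ⟨hτ, hs⟩
  have hsliceV : ∀ t ∈ I, IntegrableOn (fun σ => w (t, σ)) J →
      ∀ (f : ℝ × ℝ → ℝ), Measurable f → (∀ p ∈ I ×ˢ J, |f p| ≤ w p) →
      IntegrableOn (fun σ => f (t, σ)) J := by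
    intro t ht hints f hf hfle
    refine Integrable.mono hints
      ((hf.comp (measurable_const.prodMk measurable_id)).aestronglyMeasurable.restrict) ?_
    filter_upwards [ae_restrict_mem mJ] with σ hσ
    rw [Real.norm_eq_abs, Real.norm_eq_abs, abs_of_nonneg (hw0 _ ⟨ht, hσ⟩)]
    exact hfle _ ⟨ht, hσ⟩
  have hamabs : ∀ p ∈ I ×ˢ J, |am p| ≤ w p := by
    intro p hp; rw [abs_of_nonneg (ham0 p)]; exact ham_le p hp
  -- integrability of the derivatives
  have habs_bound : ∀ (f : ℝ × ℝ → ℝ), Measurable f → (∀ p ∈ I ×ˢ J, |f p| ≤ w p) →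
      IntegrableOn f (I ×ˢ J) := by
    intro f hf hfle
    refine Integrable.mono hwint (hf.aestronglyMeasurable.restrict) ?_
    filter_upwards [ae_restrict_mem (mI.prod mJ)] with p hp
    rw [Real.norm_eq_abs, Real.norm_eq_abs, abs_of_nonneg (hw0 p hp)]
    exact hfle p hp
  have hInta : IntegrableOn a (I ×ˢ J) := habs_bound a hma ha_le
  have hIntb : IntegrableOn b (I ×ˢ J) := habs_bound b hmb hb_le
  have hIntam : IntegrableOn am (I ×ˢ J) := by
    apply habs_bound am hmam
    intro p hp
    rw [abs_of_nonneg (ham0 p)]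
    exact ham_le p hp
  have hIntbabs : IntegrableOn (fun p => |b p|) (I ×ˢ J) := hIntb.abs
  set η : ℝ := ∫ p in I ×ˢ J, (|Dv p (0,1)| + max (-(Dv p (1,0))) 0) with hηdef
  set δ : ℝ := ∫ p in I ×ˢ J, w p with hδdef
  have hηeq : η = ∫ p in I ×ˢ J, (|b p| + am p) := by
    rw [hηdef]
    refine setIntegral_congr_fun (mI.prod mJ) ?_
    intro p hp
    simp only [hamdef]
    rw [hb_eq p hp, ha_eq p hp]
  have hδ0 : 0 ≤ δ := setIntegral_nonneg (mI.prod mJ) hw0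
  have hIntsum : IntegrableOn (fun p => |b p| + am p) (I ×ˢ J) := hIntbabs.add hIntam
  have hη0 : 0 ≤ η := by
    rw [hηeq]
    exact setIntegral_nonneg (mI.prod mJ) fun p _ => add_nonneg (abs_nonneg _) (ham0 p)
  have hb_η : (∫ p in I ×ˢ J, |b p|) ≤ η := by
    rw [hηeq]
    refine setIntegral_mono_on hIntbabs hIntsum (mI.prod mJ) ?_
    intro p _; exact le_add_of_nonneg_right (ham0 p)
  have ham_η : (∫ p in I ×ˢ J, am p) ≤ η := by
    rw [hηeq]
    refine setIntegral_mono_on hIntam hIntsum (mI.prod mJ) ?_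
    intro p _; exact le_add_of_nonneg_left (abs_nonneg _)
  have hb_δ : (∫ p in I ×ˢ J, |b p|) ≤ δ := by
    refine setIntegral_mono_on hIntbabs hwint (mI.prod mJ) ?_
    intro p hp; exact hb_le p hp
  have ha_δ : (∫ p in I ×ˢ J, |a p|) ≤ δ := by
    refine setIntegral_mono_on hInta.abs hwint (mI.prod mJ) ?_
    intro p hp; exact ha_le p hp
  have ham_δ : (∫ p in I ×ˢ J, am p) ≤ δ := by
    refine setIntegral_mono_on hIntam hwint (mI.prod mJ) ?_
    intro p hp; exact ham_le p hp
  -- product measure decomposition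
  have hrIJ : volume.restrict (I ×ˢ J) = (volume.restrict I).prod (volume.restrict J) := by
    rw [Measure.prod_restrict]; rfl
  have hrJJ : volume.restrict (J ×ˢ J) = (volume.restrict J).prod (volume.restrict J) := by
    rw [Measure.prod_restrict]; rfl
  have hiter : ∀ (f : ℝ × ℝ → ℝ), IntegrableOn f (I ×ˢ J) →
      (∫ p in I ×ˢ J, f p) = ∫ t in I, (∫ s in J, f (t, s)) := by
    intro f hf
    rw [IntegrableOn, hrIJ] at hf
    rw [hrIJ]
    exact integral_prod f hf
  have hiter_swap : ∀ (f : ℝ × ℝ → ℝ), IntegrableOn f (I ×ˢ J) →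
      (∫ p in I ×ˢ J, f p) = ∫ s in J, (∫ t in I, f (t, s)) := by
    intro f hf
    rw [IntegrableOn, hrIJ] at hf
    rw [hrIJ]
    exact integral_prod_symm f hf
  have hGH : ∀ᵐ s ∂(volume.restrict J), IntegrableOn (fun τ => w (τ, s)) I := by
    have h := hwint
    rw [IntegrableOn, hrIJ] at h
    exact h.prod_left_ae
  have hGV : ∀ᵐ t ∂(volume.restrict I), IntegrableOn (fun σ => w (t, σ)) J := by
    have h := hwint
    rw [IntegrableOn, hrIJ] at h
    exact h.prod_right_ae
  -- continuity and slice integrability of v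
  have hvcont : ∀ p ∈ I ×ˢ J, ContinuousAt v p := fun p hp => (hder p hp).continuousAt
  have hvint : ∀ t ∈ I, IntegrableOn (fun σ => v (t, σ)) J := by
    intro t ht
    rw [hJdef]
    refine ContinuousOn.integrableOn_compact isCompact_Icc ?_
    intro σ hσ
    have : ContinuousAt (fun σ : ℝ => v (t, σ)) σ :=
      (hvcont (t, σ) ⟨ht, hσ⟩).comp ((continuous_const.prodMk continuous_id).continuousAt)
    exact this.continuousWithinAt
  -- FTC on horizontal slices
  have hFTCh : ∀ s ∈ J, IntegrableOn (fun τ => w (τ, s)) I →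
      ∀ t1 ∈ I, ∀ t2 ∈ I, t1 ≤ t2 →
        v (t2, s) - v (t1, s) = ∫ τ in t1..t2, a (τ, s) := by
    intro s hs hints t1 ht1 t2 ht2 h12
    have hIccI : Icc t1 t2 ⊆ I := Icc_subset_Icc ht1.1 ht2.2
    have hderiv : ∀ τ ∈ uIcc t1 t2, HasDerivAt (fun τ => v (τ, s)) (a (τ, s)) τ := by
      intro τ hτ
      rw [uIcc_of_le h12] at hτ
      have hp : (τ, s) ∈ I ×ˢ J := ⟨hIccI hτ, hs⟩
      have hcurve : HasDerivAt (fun τ : ℝ => ((τ : ℝ), s)) ((1 : ℝ), (0 : ℝ)) τ :=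
        (hasDerivAt_id τ).prodMk (hasDerivAt_const τ s)
      have hcomp := (hder _ hp).comp_hasDerivAt τ hcurve
      simpa [ha_eq _ hp, Function.comp_def] using hcomp
    have hii : IntervalIntegrable (fun τ => a (τ, s)) volume t1 t2 := by
      rw [intervalIntegrable_iff_integrableOn_Icc_of_le h12]
      refine Integrable.mono (hints.mono_set hIccI)
        ((hma.comp (measurable_id.prodMk measurable_const)).aestronglyMeasurable.restrict) ?_
      filter_upwards [ae_restrict_mem measurableSet_Icc] with τ hτ
      rw [Real.norm_eq_abs, Real.norm_eq_abs, abs_of_nonneg (hw0 _ ⟨hIccI hτ, hs⟩)]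
      exact ha_le _ ⟨hIccI hτ, hs⟩
    rw [intervalIntegral.integral_eq_sub_of_hasDerivAt hderiv hii]
  -- FTC on vertical slices
  have hFTCv : ∀ t ∈ I, IntegrableOn (fun σ => w (t, σ)) J →
      ∀ s1 ∈ J, ∀ s2 ∈ J, s1 ≤ s2 →
        v (t, s2) - v (t, s1) = ∫ σ in s1..s2, b (t, σ) := by
    intro t ht hints s1 hs1 s2 hs2 h12
    have hIccJ : Icc s1 s2 ⊆ J := Icc_subset_Icc hs1.1 hs2.2
    have hderiv : ∀ σ ∈ uIcc s1 s2, HasDerivAt (fun σ => v (t, σ)) (b (t, σ)) σ := by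
      intro σ hσ
      rw [uIcc_of_le h12] at hσ
      have hp : (t, σ) ∈ I ×ˢ J := ⟨ht, hIccJ hσ⟩
      have hcurve : HasDerivAt (fun σ : ℝ => ((t : ℝ), (σ : ℝ))) ((0 : ℝ), (1 : ℝ)) σ :=
        (hasDerivAt_const σ t).prodMk (hasDerivAt_id σ)
      have hcomp := (hder _ hp).comp_hasDerivAt σ hcurve
      simpa [hb_eq _ hp, Function.comp_def] using hcomp
    have hii : IntervalIntegrable (fun σ => b (t, σ)) volume s1 s2 := by
      rw [intervalIntegrable_iff_integrableOn_Icc_of_le h12]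
      refine Integrable.mono (hints.mono_set hIccJ)
        ((hmb.comp (measurable_const.prodMk measurable_id)).aestronglyMeasurable.restrict) ?_
      filter_upwards [ae_restrict_mem measurableSet_Icc] with σ hσ
      rw [Real.norm_eq_abs, Real.norm_eq_abs, abs_of_nonneg (hw0 _ ⟨ht, hIccJ hσ⟩)]
      exact hb_le _ ⟨ht, hIccJ hσ⟩
    rw [intervalIntegral.integral_eq_sub_of_hasDerivAt hderiv hii]
  -- slice quantities
  set V : ℝ → ℝ := fun t => ∫ σ in J, |b (t, σ)| with hVdef
  set A : ℝ → ℝ := fun s => ∫ τ in I, am (τ, s) with hAdef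
  set N : ℝ → ℝ := fun t => ∫ σ in J, am (t, σ) with hNdef
  have hV0 : ∀ t, 0 ≤ V t := fun t => setIntegral_nonneg mJ fun σ _ => abs_nonneg _
  have hA0 : ∀ s, 0 ≤ A s := fun s => setIntegral_nonneg mI fun τ _ => ham0 _
  have hN0 : ∀ t, 0 ≤ N t := fun t => setIntegral_nonneg mJ fun σ _ => ham0 _
  -- integrability of slice quantities
  have hVint : Integrable V (volume.restrict I) := by
    have h := hIntbabs
    rw [IntegrableOn, hrIJ] at h
    exact h.integral_prod_left
  have hNint : Integrable N (volume.restrict I) := by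
    have h := hIntam
    rw [IntegrableOn, hrIJ] at h
    exact h.integral_prod_left
  have hAint : Integrable A (volume.restrict J) := by
    have h := hIntam
    rw [IntegrableOn, hrIJ] at h
    exact h.integral_prod_right
  have hVsum : (∫ t in I, V t) = ∫ p in I ×ˢ J, |b p| := by
    rw [hiter _ hIntbabs]
  have hNsum : (∫ t in I, N t) = ∫ p in I ×ˢ J, am p := by
    rw [hiter _ hIntam]
  have hAsum : (∫ s in J, A s) = ∫ p in I ×ˢ J, am p := by
    rw [hiter_swap _ hIntam]
  -- vertical oscillation bound
  have hosc : ∀ t ∈ I, IntegrableOn (fun σ => w (t, σ)) J →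
      ∀ s ∈ J, ∀ σ ∈ J, |v (t, s) - v (t, σ)| ≤ V t := by
    intro t ht hints s hs σ hσ
    have hbint : IntegrableOn (fun σ => |b (t, σ)|) J := by
      refine Integrable.mono hints
        (((hmb.comp (measurable_const.prodMk measurable_id)).abs).aestronglyMeasurable.restrict) ?_
      filter_upwards [ae_restrict_mem mJ] with ρ hρ
      rw [Real.norm_eq_abs, Real.norm_eq_abs, abs_of_nonneg (hw0 _ ⟨ht, hρ⟩), abs_abs]
      exact hb_le _ ⟨ht, hρ⟩
    have key : ∀ s1 ∈ J, ∀ s2 ∈ J, s1 ≤ s2 → |v (t, s2) - v (t, s1)| ≤ V t := by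
      intro s1 hs1 s2 hs2 h12
      rw [hFTCv t ht hints s1 hs1 s2 hs2 h12]
      calc |∫ ρ in s1..s2, b (t, ρ)| ≤ ∫ ρ in s1..s2, |b (t, ρ)| :=
            intervalIntegral.abs_integral_le_integral_abs h12
      _ = ∫ ρ in Ioc s1 s2, |b (t, ρ)| := by rw [intervalIntegral.integral_of_le h12]
      _ ≤ ∫ ρ in J, |b (t, ρ)| := by
            refine setIntegral_mono_set hbint ?_ ?_
            · filter_upwards with ρ using abs_nonneg _
            · exact HasSubset.Subset.eventuallyLE (fun ρ hρ => Icc_subset_Icc hs1.1 hs2.2 (Ioc_subset_Icc_self hρ))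
      _ = V t := rfl
    rcases le_total σ s with hle | hle
    · exact key σ hσ s hs hle
    · rw [abs_sub_comm]
      exact key s hs σ hσ hle
  -- horizontal one-sided comparison
  have hcomp : ∀ s ∈ J, IntegrableOn (fun τ => w (τ, s)) I →
      ∀ t1 ∈ I, ∀ t2 ∈ I, t1 ≤ t2 → v (t1, s) ≤ v (t2, s) + A s := by
    intro s hs hints t1 ht1 t2 ht2 h12
    have hIccI : Icc t1 t2 ⊆ I := Icc_subset_Icc ht1.1 ht2.2
    have haint : IntegrableOn (fun τ => a (τ, s)) I := by
      refine Integrable.mono hints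
        ((hma.comp (measurable_id.prodMk measurable_const)).aestronglyMeasurable.restrict) ?_
      filter_upwards [ae_restrict_mem mI] with τ hτ
      rw [Real.norm_eq_abs, Real.norm_eq_abs, abs_of_nonneg (hw0 _ ⟨hτ, hs⟩)]
      exact ha_le _ ⟨hτ, hs⟩
    have hamint : IntegrableOn (fun τ => am (τ, s)) I := by
      refine Integrable.mono hints
        ((hmam.comp (measurable_id.prodMk measurable_const)).aestronglyMeasurable.restrict) ?_
      filter_upwards [ae_restrict_mem mI] with τ hτ
      rw [Real.norm_eq_abs, Real.norm_eq_abs, abs_of_nonneg (ham0 _), abs_of_nonneg (hw0 _ ⟨hτ, hs⟩)]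
      exact ham_le _ ⟨hτ, hs⟩
    have h1 : v (t2, s) - v (t1, s) = ∫ τ in t1..t2, a (τ, s) := hFTCh s hs hints t1 ht1 t2 ht2 h12
    have hamii : IntervalIntegrable (fun τ => am (τ, s)) volume t1 t2 := by
      rw [intervalIntegrable_iff_integrableOn_Icc_of_le h12]
      exact hamint.mono_set hIccI
    have haii : IntervalIntegrable (fun τ => a (τ, s)) volume t1 t2 := by
      rw [intervalIntegrable_iff_integrableOn_Icc_of_le h12]
      exact haint.mono_set hIccI
    have h2 : (∫ τ in t1..t2, (-(am (τ, s)))) ≤ ∫ τ in t1..t2, a (τ, s) := by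
      refine intervalIntegral.integral_mono_on h12 hamii.neg haii ?_
      intro τ _
      simp only [neg_le]
      exact le_max_left _ _
    have h3 : (∫ τ in t1..t2, am (τ, s)) ≤ A s := by
      rw [intervalIntegral.integral_of_le h12]
      refine setIntegral_mono_set hamint ?_ ?_
      · filter_upwards with ρ using ham0 _
      · exact HasSubset.Subset.eventuallyLE (fun ρ hρ => hIccI (Ioc_subset_Icc_self hρ))
    rw [intervalIntegral.integral_neg] at h2
    have : -(A s) ≤ v (t2, s) - v (t1, s) := by
      rw [h1]; linarith
    linarith
  -- the averaged profile
  set g : ℝ → ℝ := fun t => ℓ⁻¹ * ∫ σ in J, v (t, σ) with hgdef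
  have hg_sub : ∀ t1 ∈ I, ∀ t2 ∈ I, t1 ≤ t2 →
      g t2 - g t1 = ℓ⁻¹ * ∫ s in J, (∫ τ in t1..t2, a (τ, s)) := by
    intro t1 ht1 t2 ht2 h12
    rw [hgdef]
    simp only
    rw [← mul_sub, ← integral_sub (hvint t2 ht2) (hvint t1 ht1)]
    congr 1
    refine integral_congr_ae ?_
    filter_upwards [hGH, ae_restrict_mem mJ] with s hgood hs
    exact hFTCh s hs hgood t1 ht1 t2 ht2 h12
  have hg_osc : ∀ t1 ∈ I, ∀ t2 ∈ I, t1 ≤ t2 → |g t2 - g t1| ≤ ℓ⁻¹ * δ := by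
    intro t1 ht1 t2 ht2 h12
    rw [hg_sub t1 ht1 t2 ht2 h12, abs_mul, abs_of_nonneg (inv_nonneg.2 hℓ.le)]
    refine mul_le_mul_of_nonneg_left ?_ (inv_nonneg.2 hℓ.le)
    have habs_int : IntegrableOn (fun s => ∫ τ in I, |a (τ, s)|) J := by
      have h : IntegrableOn (fun p => |a p|) (I ×ˢ J) := hInta.abs
      rw [IntegrableOn, hrIJ] at h
      exact h.integral_prod_right
    have step1 : |∫ s in J, (∫ τ in t1..t2, a (τ, s))| ≤
        ∫ s in J, |∫ τ in t1..t2, a (τ, s)| := by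
      simpa [Real.norm_eq_abs] using
        norm_integral_le_integral_norm (μ := volume.restrict J)
          (fun s => ∫ τ in t1..t2, a (τ, s))
    have step2 : (∫ s in J, |∫ τ in t1..t2, a (τ, s)|) ≤
        ∫ s in J, (∫ τ in I, |a (τ, s)|) := by
      refine integral_mono_of_nonneg ?_ habs_int ?_
      · filter_upwards with s using abs_nonneg _
      · filter_upwards [hGH, ae_restrict_mem mJ] with s hgood hs
        have hIccI : Icc t1 t2 ⊆ I := Icc_subset_Icc ht1.1 ht2.2
        have hai : IntegrableOn (fun τ => |a (τ, s)|) I := (hsliceH s hs hgood a hma ha_le).abs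
        calc |∫ τ in t1..t2, a (τ, s)| ≤ ∫ τ in t1..t2, |a (τ, s)| :=
              intervalIntegral.abs_integral_le_integral_abs h12
          _ = ∫ τ in Ioc t1 t2, |a (τ, s)| := by rw [intervalIntegral.integral_of_le h12]
          _ ≤ ∫ τ in I, |a (τ, s)| := by
              refine setIntegral_mono_set hai ?_ ?_
              · filter_upwards with ρ using abs_nonneg _
              · exact HasSubset.Subset.eventuallyLE
                  (fun ρ hρ => hIccI (Ioc_subset_Icc_self hρ))
    calc |∫ s in J, (∫ τ in t1..t2, a (τ, s))| ≤
        ∫ s in J, (∫ τ in I, |a (τ, s)|) := le_trans step1 step2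
      _ = ∫ p in I ×ˢ J, |a p| := (hiter_swap _ hInta.abs).symm
      _ ≤ δ := ha_δ
  have hg_lower : ∀ t1 ∈ I, ∀ t2 ∈ I, t1 ≤ t2 →
      -(ℓ⁻¹ * ∫ τ in Ioc t1 t2, N τ) ≤ g t2 - g t1 := by
    intro t1 ht1 t2 ht2 h12
    rw [hg_sub t1 ht1 t2 ht2 h12, ← mul_neg]
    refine mul_le_mul_of_nonneg_left ?_ (inv_nonneg.2 hℓ.le)
    have hIocI : Ioc t1 t2 ⊆ I := fun τ hτ =>
      (Icc_subset_Icc ht1.1 ht2.2) (Ioc_subset_Icc_self hτ)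
    -- Fubini swap
    have hsub : IntegrableOn am (Ioc t1 t2 ×ˢ J) :=
      hIntam.mono_set (prod_mono_left hIocI)
    have hr' : volume.restrict (Ioc t1 t2 ×ˢ J) =
        (volume.restrict (Ioc t1 t2)).prod (volume.restrict J) := by
      rw [Measure.prod_restrict]; rfl
    rw [IntegrableOn, hr'] at hsub
    have hswap : (∫ s in J, (∫ τ in Ioc t1 t2, am (τ, s))) = ∫ τ in Ioc t1 t2, N τ := by
      have := integral_integral_swap (f := fun τ s => am (τ, s)) hsub
      rw [← this]
    have hinner_int : Integrable (fun s => ∫ τ in Ioc t1 t2, am (τ, s))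
        (volume.restrict J) := hsub.integral_prod_right
    have houter_int : Integrable (fun s => ∫ τ in t1..t2, a (τ, s)) (volume.restrict J) := by
      refine Integrable.congr ((hvint t2 ht2).sub (hvint t1 ht1)) ?_
      filter_upwards [hGH, ae_restrict_mem mJ] with s hgood hs
      exact hFTCh s hs hgood t1 ht1 t2 ht2 h12
    have hmono : (∫ s in J, (-(∫ τ in Ioc t1 t2, am (τ, s)))) ≤
        ∫ s in J, (∫ τ in t1..t2, a (τ, s)) := by
      refine integral_mono_ae hinner_int.neg houter_int ?_
      filter_upwards [hGH, ae_restrict_mem mJ] with s hgood hs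
      have hamii : IntervalIntegrable (fun τ => am (τ, s)) volume t1 t2 := by
        rw [intervalIntegrable_iff_integrableOn_Icc_of_le h12]
        exact (hsliceH s hs hgood am hmam hamabs).mono_set (Icc_subset_Icc ht1.1 ht2.2)
      have haii : IntervalIntegrable (fun τ => a (τ, s)) volume t1 t2 := by
        rw [intervalIntegrable_iff_integrableOn_Icc_of_le h12]
        exact (hsliceH s hs hgood a hma ha_le).mono_set (Icc_subset_Icc ht1.1 ht2.2)
      have h2 : (∫ τ in t1..t2, (-(am (τ, s)))) ≤ ∫ τ in t1..t2, a (τ, s) := by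
        refine intervalIntegral.integral_mono_on h12 hamii.neg haii ?_
        intro τ _
        simp only [neg_le]
        exact le_max_left _ _
      rw [intervalIntegral.integral_neg] at h2
      rw [intervalIntegral.integral_of_le h12] at h2
      exact h2
    rw [integral_neg] at hmono
    rw [hswap] at hmono
    exact hmono
  -- the monotone correction
  set c : ℝ → ℝ := fun t => ℓ⁻¹ * ∫ τ in Ioc (-ℓ) t, N τ with hcdef
  have hIocsubI : ∀ t1 t2 : ℝ, t1 ∈ I → t2 ∈ I → Ioc t1 t2 ⊆ I := by
    intro t1 t2 ht1 ht2 τ hτ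
    exact Icc_subset_Icc ht1.1 ht2.2 (Ioc_subset_Icc_self hτ)
  have hNintOn : IntegrableOn N I := hNint
  have hc_diff : ∀ t1 ∈ I, ∀ t2 ∈ I, t1 ≤ t2 →
      c t2 - c t1 = ℓ⁻¹ * ∫ τ in Ioc t1 t2, N τ := by
    intro t1 ht1 t2 ht2 h12
    rw [hcdef]
    simp only
    rw [← mul_sub]
    congr 1
    have hun : Ioc (-ℓ) t2 = Ioc (-ℓ) t1 ∪ Ioc t1 t2 :=
      (Ioc_union_Ioc_eq_Ioc ht1.1 h12).symm
    rw [hun, setIntegral_union (Ioc_disjoint_Ioc_of_le le_rfl) measurableSet_Ioc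
      (hNintOn.mono_set (hIocsubI _ _ ⟨le_refl (-ℓ), by linarith⟩ ht1))
      (hNintOn.mono_set (hIocsubI _ _ ht1 ht2))]
    ring
  have hc_nonneg_diff : ∀ t1 ∈ I, ∀ t2 ∈ I, t1 ≤ t2 → c t1 ≤ c t2 := by
    intro t1 ht1 t2 ht2 h12
    have hd := hc_diff t1 ht1 t2 ht2 h12
    have : 0 ≤ ℓ⁻¹ * ∫ τ in Ioc t1 t2, N τ :=
      mul_nonneg (inv_nonneg.2 hℓ.le) (setIntegral_nonneg measurableSet_Ioc fun τ _ => hN0 τ)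
    linarith
  have hNItot : (∫ τ in I, N τ) ≤ δ := by rw [hNsum]; exact ham_δ
  have hNIη : (∫ τ in I, N τ) ≤ η := by rw [hNsum]; exact ham_η
  have hc_bound : ∀ t ∈ I, c t ≤ ℓ⁻¹ * ∫ τ in I, N τ := by
    intro t ht
    refine mul_le_mul_of_nonneg_left ?_ (inv_nonneg.2 hℓ.le)
    refine setIntegral_mono_set hNintOn ?_ ?_
    · filter_upwards with τ using hN0 τ
    · exact HasSubset.Subset.eventuallyLE (hIocsubI _ _ ⟨le_refl (-ℓ), by linarith⟩ ht)
  have hc0 : ∀ t, 0 ≤ c t :=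
    fun t => mul_nonneg (inv_nonneg.2 hℓ.le)
      (setIntegral_nonneg measurableSet_Ioc fun τ _ => hN0 τ)
  -- the monotone function h
  set π : ℝ → ℝ := fun t => max (-ℓ) (min t ℓ) with hπdef
  have hπI : ∀ t, π t ∈ I := by
    intro t
    constructor
    · exact le_max_left _ _
    · exact max_le (by linarith) (min_le_right _ _)
  have hπmono : Monotone π := fun x y hxy => max_le_max le_rfl (min_le_min hxy le_rfl)
  have hπid : ∀ t ∈ I, π t = t := by
    intro t ht
    rw [hπdef]
    simp only
    rw [min_eq_left ht.2, max_eq_right ht.1]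
  set h : ℝ → ℝ := fun t => g (π t) + c (π t) with hhdef
  have hh0mono : ∀ t1 ∈ I, ∀ t2 ∈ I, t1 ≤ t2 → g t1 + c t1 ≤ g t2 + c t2 := by
    intro t1 ht1 t2 ht2 h12
    have h1 := hg_lower t1 ht1 t2 ht2 h12
    have h2 := hc_diff t1 ht1 t2 ht2 h12
    linarith
  have hhmono : Monotone h := by
    intro x y hxy
    rw [hhdef]
    simp only
    exact hh0mono _ (hπI x) _ (hπI y) (hπmono hxy)
  have hhI : ∀ t ∈ I, h t = g t + c t := by
    intro t ht
    rw [hhdef]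
    simp only
    rw [hπid t ht]
  have hconstJ : ∀ r : ℝ, IntegrableOn (fun _ => r) J := fun r =>
    integrableOn_const (by rw [hJdef, Real.volume_Icc]; exact ENNReal.ofReal_ne_top)
  -- comparison of v with the vertical average
  have hvg_gen : ∀ t ∈ I, IntegrableOn (fun σ => w (t, σ)) J → ∀ s ∈ J,
      |v (t, s) - g t| ≤ V t := by
    intro t htI hgood s hs
    have hconst : (∫ _ in J, v (t, s)) = ℓ * v (t, s) := by
      rw [setIntegral_const, smul_eq_mul, measureReal_def, hvolJ]
    have hrepr : v (t, s) - g t = ℓ⁻¹ * ∫ σ in J, (v (t, s) - v (t, σ)) := by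
      rw [hgdef]
      simp only
      rw [integral_sub (hconstJ (v (t, s))) (hvint t htI), hconst]
      field_simp
    rw [hrepr, abs_mul, abs_of_nonneg (inv_nonneg.2 hℓ.le)]
    have hbound : |∫ σ in J, (v (t, s) - v (t, σ))| ≤ ℓ * V t := by
      calc |∫ σ in J, (v (t, s) - v (t, σ))| ≤ ∫ σ in J, |v (t, s) - v (t, σ)| := by
            simpa [Real.norm_eq_abs] using
              norm_integral_le_integral_norm (μ := volume.restrict J)
                (fun σ => v (t, s) - v (t, σ))
      _ ≤ ∫ _ in J, V t := by
            refine integral_mono_of_nonneg ?_ (hconstJ (V t)) ?_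
            · filter_upwards with σ using abs_nonneg _
            · filter_upwards [ae_restrict_mem mJ] with σ hσ
              exact hosc t htI hgood s hs σ hσ
      _ = ℓ * V t := by rw [setIntegral_const, smul_eq_mul, measureReal_def, hvolJ]
    calc ℓ⁻¹ * |∫ σ in J, (v (t, s) - v (t, σ))| ≤ ℓ⁻¹ * (ℓ * V t) :=
          mul_le_mul_of_nonneg_left hbound (inv_nonneg.2 hℓ.le)
    _ = V t := by field_simp
  -- pointwise bound 1
  have hbd1 : ∀ t ∈ J, IntegrableOn (fun σ => w (t, σ)) J → ∀ s ∈ J,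
      |v (t, s) - h t| ≤ V t + ℓ⁻¹ * η := by
    intro t ht hgood s hs
    have htI : t ∈ I := hJI ht
    have hvg := hvg_gen t htI hgood s hs
    have hct : c t ≤ ℓ⁻¹ * η :=
      le_trans (hc_bound t htI) (mul_le_mul_of_nonneg_left hNIη (inv_nonneg.2 hℓ.le))
    rw [hhI t htI]
    calc |v (t, s) - (g t + c t)| = |(v (t, s) - g t) + (-(c t))| := by
          rw [show v (t, s) - (g t + c t) = (v (t, s) - g t) + (-(c t)) by ring]
    _ ≤ |v (t, s) - g t| + |(-(c t))| := abs_add_le _ _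
    _ = |v (t, s) - g t| + c t := by rw [abs_neg, abs_of_nonneg (hc0 t)]
    _ ≤ V t + ℓ⁻¹ * η := add_le_add hvg hct
  -- pointwise bound 2
  have hbd2 : ∀ s ∈ J, IntegrableOn (fun τ => w (τ, s)) I → ∀ t ∈ J,
      |v (t, s) - h t| ≤ A s + 6 * (ℓ⁻¹ * δ) := by
    intro s hs hgood t ht
    have htI : t ∈ I := hJI ht
    have hVsel : ∀ (α β : ℝ), α < β → Icc α β ⊆ I →
        ∃ t' ∈ Icc α β, (IntegrableOn (fun σ => w (t', σ)) J) ∧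
          V t' ≤ 2 * (β - α)⁻¹ * ∫ τ in Icc α β, V τ := by
      intro α β hαβ hsub
      refine markov_sel α β hαβ V
        (hVint.mono_measure (Measure.restrict_mono hsub le_rfl)) hV0 _ ?_
      exact Filter.Eventually.filter_mono (ae_mono (Measure.restrict_mono hsub le_rfl)) hGV
    have hVIccδ : ∀ (α β : ℝ), Icc α β ⊆ I → (∫ τ in Icc α β, V τ) ≤ δ := by
      intro α β hsub
      calc (∫ τ in Icc α β, V τ) ≤ ∫ τ in I, V τ := by
            refine setIntegral_mono_set hVint ?_ (HasSubset.Subset.eventuallyLE hsub)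
            filter_upwards with τ using hV0 τ
      _ = ∫ p in I ×ˢ J, |b p| := hVsum
      _ ≤ δ := hb_δ
    have hinvpos : (0:ℝ) ≤ ℓ⁻¹ := inv_nonneg.2 hℓ.le
    have hct : c t ≤ ℓ⁻¹ * δ :=
      le_trans (hc_bound t htI) (mul_le_mul_of_nonneg_left hNItot hinvpos)
    have hup : v (t, s) - h t ≤ A s + 5 * (ℓ⁻¹ * δ) := by
      have hsub : Icc t (t + ℓ/2) ⊆ I := by
        rw [hIdef]
        apply Icc_subset_Icc
        · linarith [ht.1]
        · linarith [ht.2]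
      obtain ⟨t', ht', hgood', hVt'⟩ := hVsel t (t + ℓ/2) (by linarith) hsub
      have ht'I : t' ∈ I := hsub ht'
      have hVt'le : V t' ≤ 4 * (ℓ⁻¹ * δ) := by
        have h1 : (2 : ℝ) * ((t + ℓ/2) - t)⁻¹ = 4 * ℓ⁻¹ := by
          rw [show (t + ℓ/2) - t = ℓ/2 by ring]
          rw [show (ℓ/2)⁻¹ = 2 * ℓ⁻¹ by field_simp]
          ring
        calc V t' ≤ 2 * ((t + ℓ/2) - t)⁻¹ * ∫ τ in Icc t (t + ℓ/2), V τ := hVt'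
        _ = 4 * ℓ⁻¹ * ∫ τ in Icc t (t + ℓ/2), V τ := by rw [h1]
        _ ≤ 4 * ℓ⁻¹ * δ := by
              refine mul_le_mul_of_nonneg_left (hVIccδ _ _ hsub) (by positivity)
        _ = 4 * (ℓ⁻¹ * δ) := by ring
      have h1 : v (t, s) ≤ v (t', s) + A s := hcomp s hs hgood t htI t' ht'I ht'.1
      have h2 := abs_le.1 (hvg_gen t' ht'I hgood' s hs)
      have h3 := abs_le.1 (hg_osc t htI t' ht'I ht'.1)
      have h4 : h t = g t + c t := hhI t htI
      have h5 := hc0 t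
      rw [h4]
      linarith [h2.2, h3.2]
    have hlo : -(A s + 6 * (ℓ⁻¹ * δ)) ≤ v (t, s) - h t := by
      have hsub : Icc (t - ℓ/2) t ⊆ I := by
        rw [hIdef]
        apply Icc_subset_Icc
        · linarith [ht.1]
        · linarith [ht.2]
      obtain ⟨t', ht', hgood', hVt'⟩ := hVsel (t - ℓ/2) t (by linarith) hsub
      have ht'I : t' ∈ I := hsub ht'
      have hVt'le : V t' ≤ 4 * (ℓ⁻¹ * δ) := by
        have h1 : (2 : ℝ) * (t - (t - ℓ/2))⁻¹ = 4 * ℓ⁻¹ := by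
          rw [show t - (t - ℓ/2) = ℓ/2 by ring]
          rw [show (ℓ/2)⁻¹ = 2 * ℓ⁻¹ by field_simp]
          ring
        calc V t' ≤ 2 * (t - (t - ℓ/2))⁻¹ * ∫ τ in Icc (t - ℓ/2) t, V τ := hVt'
        _ = 4 * ℓ⁻¹ * ∫ τ in Icc (t - ℓ/2) t, V τ := by rw [h1]
        _ ≤ 4 * ℓ⁻¹ * δ := by
              refine mul_le_mul_of_nonneg_left (hVIccδ _ _ hsub) (by positivity)
        _ = 4 * (ℓ⁻¹ * δ) := by ring
      have h1 : v (t', s) ≤ v (t, s) + A s := hcomp s hs hgood t' ht'I t htI ht'.2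
      have h2 := abs_le.1 (hvg_gen t' ht'I hgood' s hs)
      have h3 := abs_le.1 (hg_osc t' ht'I t htI ht'.2)
      have h4 : h t = g t + c t := hhI t htI
      rw [h4]
      linarith [h2.1, h3.2]
    exact abs_le.2 ⟨hlo, by nlinarith [mul_nonneg hinvpos hδ0]⟩
  -- assemble
  refine ⟨h, hhmono, ?_, ?_⟩
  · -- the L² estimate
    set Φ : ℝ → ℝ := fun t => V t + ℓ⁻¹ * η with hΦdef
    set Θ : ℝ → ℝ := fun s => A s + 6 * (ℓ⁻¹ * δ) with hΘdef
    have hVintJ : Integrable V (volume.restrict J) :=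
      hVint.mono_measure (Measure.restrict_mono hJI le_rfl)
    have hΦint : Integrable Φ (volume.restrict J) := hVintJ.add (hconstJ _)
    have hΘint : Integrable Θ (volume.restrict J) := hAint.add (hconstJ _)
    have hprod : Integrable (fun z : ℝ × ℝ => Φ z.1 * Θ z.2)
        ((volume.restrict J).prod (volume.restrict J)) := hΦint.mul_prod hΘint
    have hΦ0 : ∀ t, 0 ≤ Φ t := fun t =>
      add_nonneg (hV0 t) (mul_nonneg (inv_nonneg.2 hℓ.le) hη0)
    have hΘ0 : ∀ s, 0 ≤ Θ s := fun s =>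
      add_nonneg (hA0 s) (by positivity)
    have hbound_ae : ∀ᵐ z ∂(volume.restrict (J ×ˢ J)), (v z - h z.1)^2 ≤ Φ z.1 * Θ z.2 := by
      rw [hrJJ]
      have e1 : ∀ᵐ z ∂((volume.restrict J).prod (volume.restrict J)),
          IntegrableOn (fun σ => w (z.1, σ)) J :=
        Measure.quasiMeasurePreserving_fst.ae
          (Filter.Eventually.filter_mono (ae_mono (Measure.restrict_mono hJI le_rfl)) hGV)
      have e2 : ∀ᵐ z ∂((volume.restrict J).prod (volume.restrict J)),
          IntegrableOn (fun τ => w (τ, z.2)) I :=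
        Measure.quasiMeasurePreserving_snd.ae hGH
      have e3 : ∀ᵐ z ∂((volume.restrict J).prod (volume.restrict J)), z.1 ∈ J :=
        Measure.quasiMeasurePreserving_fst.ae (ae_restrict_mem mJ)
      have e4 : ∀ᵐ z ∂((volume.restrict J).prod (volume.restrict J)), z.2 ∈ J :=
        Measure.quasiMeasurePreserving_snd.ae (ae_restrict_mem mJ)
      filter_upwards [e1, e2, e3, e4] with z h1 h2 h3 h4
      have b1 := hbd1 z.1 h3 h1 z.2 h4
      have b2 := hbd2 z.2 h4 h2 z.1 h3
      rw [Prod.mk.eta] at b1 b2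
      calc (v z - h z.1)^2 = |v z - h z.1| * |v z - h z.1| := by
            rw [pow_two, ← abs_mul_abs_self]
      _ ≤ Φ z.1 * Θ z.2 := mul_le_mul b1 b2 (abs_nonneg _) (hΦ0 _)
    have hineq1 : (∫ z in J ×ˢ J, (v z - h z.1)^2) ≤ ∫ z in J ×ˢ J, Φ z.1 * Θ z.2 := by
      have hp : Integrable (fun z : ℝ × ℝ => Φ z.1 * Θ z.2) (volume.restrict (J ×ˢ J)) := by
        rw [hrJJ]; exact hprod
      refine integral_mono_of_nonneg ?_ hp hbound_ae
      filter_upwards with z using sq_nonneg _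
    have heq : (∫ z in J ×ˢ J, Φ z.1 * Θ z.2) = (∫ t in J, Φ t) * (∫ s in J, Θ s) := by
      rw [hrJJ]; exact integral_prod_mul Φ Θ
    have hVJle : (∫ t in J, V t) ≤ η := by
      calc (∫ t in J, V t) ≤ ∫ t in I, V t := by
            refine setIntegral_mono_set hVint ?_ (HasSubset.Subset.eventuallyLE hJI)
            filter_upwards with τ using hV0 τ
      _ = ∫ p in I ×ˢ J, |b p| := hVsum
      _ ≤ η := hb_η
    have hΦval : (∫ t in J, Φ t) ≤ 2 * η := by
      rw [hΦdef]
      rw [integral_add hVintJ (hconstJ _), setIntegral_const, smul_eq_mul, measureReal_def, hvolJ]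
      have : ℓ * (ℓ⁻¹ * η) = η := by field_simp
      rw [this]
      linarith [hVJle]
    have hΘval : (∫ s in J, Θ s) ≤ 7 * δ := by
      rw [hΘdef]
      rw [integral_add hAint (hconstJ _), setIntegral_const, smul_eq_mul, measureReal_def, hvolJ]
      have h6 : ℓ * (6 * (ℓ⁻¹ * δ)) = 6 * δ := by field_simp
      rw [h6]
      have hAJ : (∫ s in J, A s) ≤ δ := by rw [hAsum]; exact ham_δ
      linarith
    have hΦpos : 0 ≤ ∫ t in J, Φ t := integral_nonneg hΦ0
    have hΘpos : 0 ≤ ∫ s in J, Θ s := integral_nonneg hΘ0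
    calc (∫ z in J ×ˢ J, (v z - h z.1)^2) ≤ (∫ t in J, Φ t) * (∫ s in J, Θ s) := by
          rw [← heq]; exact hineq1
    _ ≤ (2 * η) * (7 * δ) := mul_le_mul hΦval hΘval hΘpos (by linarith)
    _ ≤ 100 * η * δ := by nlinarith [mul_nonneg hη0 hδ0]
  · -- the L^∞ estimate
    have hhalfI : (ℓ/2) ∈ I := ⟨by linarith, by linarith⟩
    have hmhalfI : (-(ℓ/2)) ∈ I := ⟨by linarith, by linarith⟩
    refine ⟨(g (ℓ/2) + c (ℓ/2) + (g (-(ℓ/2)) + c (-(ℓ/2))))/2, ?_⟩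
    intro t ht
    have htI : t ∈ I := hJI ht
    have hgd := abs_le.1 (hg_osc (-(ℓ/2)) hmhalfI (ℓ/2) hhalfI (by linarith))
    have hcd1 : c (ℓ/2) ≤ ℓ⁻¹ * δ :=
      le_trans (hc_bound _ hhalfI) (mul_le_mul_of_nonneg_left hNItot (inv_nonneg.2 hℓ.le))
    have hcd2 : 0 ≤ c (-(ℓ/2)) := hc0 _
    have hlow := hh0mono (-(ℓ/2)) hmhalfI t htI ht.1
    have hhigh := hh0mono t htI (ℓ/2) hhalfI ht.2
    rw [hhI t htI]
    rw [abs_le]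
    constructor
    · linarith [hgd.2]
    · linarith [hgd.2]


/-- one-sided Poincaré inequality. There is an absolute constant `C > 0` such
that for every `ℓ > 0`, orthonormal pair `ν, ν^⊥`, rectangles
`Q*_ν = {|x·ν| ≤ ℓ, |x·ν^⊥| ≤ ℓ/2}` and `Q_ν = {|x·ν| ≤ ℓ/2, |x·ν^⊥| ≤ ℓ/2}`, and
`u ∈ W^{1,1}(Q*_ν)` with defect `η = ∫_{Q*}(|∂_{ν^⊥}u| + (∂_ν u)₋)`, there is a nondecreasing
`h : ℝ → ℝ` with `∫_{Q_ν} |u - h(x·ν)|² ≤ C η |Du|(Q*_ν)` and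
`|h(x·ν) - h̄| ≤ ℓ⁻¹ |Du|(Q*_ν)` on `Q_ν` for some constant `h̄`. -/
theorem stmt13 :
    ∃ C > 0, ∀ (ℓ : ℝ), 0 < ℓ →
      ∀ (ν νp : EuclideanSpace ℝ (Fin 2)), ‖ν‖ = 1 → ‖νp‖ = 1 → ⟪ν, νp⟫ = 0 →
      ∀ (u : EuclideanSpace ℝ (Fin 2) → ℝ)
        (Du : EuclideanSpace ℝ (Fin 2) → (EuclideanSpace ℝ (Fin 2) →L[ℝ] ℝ)),
      let Qstar : Set (EuclideanSpace ℝ (Fin 2)) :=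
        {x | |⟪x, ν⟫| ≤ ℓ ∧ |⟪x, νp⟫| ≤ ℓ / 2}
      let Qnu : Set (EuclideanSpace ℝ (Fin 2)) :=
        {x | |⟪x, ν⟫| ≤ ℓ / 2 ∧ |⟪x, νp⟫| ≤ ℓ / 2}
      (∀ x ∈ Qstar, HasFDerivAt u (Du x) x) →
      Integrable (fun x => ‖Du x‖) (volume.restrict Qstar) →
      ∃ h : ℝ → ℝ, Monotone h ∧
        (∫ x in Qnu, (u x - h ⟪x, ν⟫) ^ 2) ≤
          C * (∫ x in Qstar, (|Du x νp| + max (-(Du x ν)) 0)) * ∫ x in Qstar, ‖Du x‖ ∧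
        ∃ hbar : ℝ, ∀ x ∈ Qnu, |h ⟪x, ν⟫ - hbar| ≤ ℓ⁻¹ * ∫ x in Qstar, ‖Du x‖ := by
  refine ⟨100, by norm_num, ?_⟩
  intro ℓ hℓ ν νp hν hνp hor u Du Qstar Qnu hder hint
  -- orthonormal basis and measure-preserving coordinates
  have hνν : ⟪ν, ν⟫ = 1 := by rw [real_inner_self_eq_norm_sq, hν]; norm_num
  have hνpνp : ⟪νp, νp⟫ = 1 := by rw [real_inner_self_eq_norm_sq, hνp]; norm_num
  have hor' : ⟪νp, ν⟫ = 0 := by rw [real_inner_comm]; exact hor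
  have horth : Orthonormal ℝ ![ν, νp] := by
    rw [orthonormal_iff_ite]
    intro i j
    fin_cases i <;> fin_cases j <;>
      simp only [Matrix.cons_val_zero, Matrix.cons_val_one, Matrix.head_cons, Fin.mk_zero,
        Fin.mk_one] <;>
      first
        | simpa using hνν
        | simpa using hor
        | simpa using hor'
        | simpa using hνpνp
  have hcard : Fintype.card (Fin 2) = Module.finrank ℝ (EuclideanSpace ℝ (Fin 2)) := by
    simp [finrank_euclideanSpace_fin]
  let Bb : Module.Basis (Fin 2) ℝ (EuclideanSpace ℝ (Fin 2)) :=
    basisOfLinearIndependentOfCardEqFinrank horth.linearIndependent hcard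
  let B : OrthonormalBasis (Fin 2) ℝ (EuclideanSpace ℝ (Fin 2)) :=
    Bb.toOrthonormalBasis (by rwa [coe_basisOfLinearIndependentOfCardEqFinrank])
  have hB : ∀ i, B i = ![ν, νp] i := by
    intro i
    simp [B, Bb, Module.Basis.coe_toOrthonormalBasis, coe_basisOfLinearIndependentOfCardEqFinrank]
  let Ψ : (ℝ × ℝ) ≃ᵐ EuclideanSpace ℝ (Fin 2) :=
    (MeasurableEquiv.piFinTwo fun _ => ℝ).symm.trans
      ((MeasurableEquiv.toLp 2 (Fin 2 → ℝ)).trans B.measurableEquiv.symm)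
  have h1 : MeasurePreserving (⇑(MeasurableEquiv.piFinTwo fun _ : Fin 2 => ℝ).symm)
      volume volume := (volume_preserving_piFinTwo fun _ => ℝ).symm _
  have h2 : MeasurePreserving (⇑(MeasurableEquiv.toLp 2 (Fin 2 → ℝ)))
      volume volume := (EuclideanSpace.volume_preserving_symm_measurableEquiv_toLp (Fin 2)).symm
  have h3 : MeasurePreserving (⇑B.measurableEquiv.symm) volume volume :=
    B.measurePreserving_measurableEquiv.symm _
  have hΨmp : MeasurePreserving Ψ volume volume := (h3.comp h2).comp h1
  have hΨ : ∀ p : ℝ × ℝ, Ψ p = p.1 • ν + p.2 • νp := by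
    intro p
    have hd : Ψ p = B.repr.symm ((MeasurableEquiv.toLp 2 (Fin 2 → ℝ))
        ((MeasurableEquiv.piFinTwo fun _ => ℝ).symm p)) := rfl
    rw [hd, ← B.sum_repr_symm, Fin.sum_univ_two, hB 0, hB 1]
    simp [MeasurableEquiv.coe_toLp, MeasurableEquiv.piFinTwo]
  -- the inner products in the new coordinates
  have hin1 : ∀ p : ℝ × ℝ, ⟪Ψ p, ν⟫ = p.1 := by
    intro p
    rw [hΨ p, inner_add_left, real_inner_smul_left, real_inner_smul_left, hνν, hor']
    ring
  have hin2 : ∀ p : ℝ × ℝ, ⟪Ψ p, νp⟫ = p.2 := by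
    intro p
    rw [hΨ p, inner_add_left, real_inner_smul_left, real_inner_smul_left, hνpνp, hor]
    ring
  -- preimages of the rectangles
  have hQs : Ψ ⁻¹' Qstar = Icc (-ℓ) ℓ ×ˢ Icc (-(ℓ/2)) (ℓ/2) := by
    ext p
    simp only [mem_preimage, Qstar, mem_setOf_eq, hin1 p, hin2 p, Set.mem_prod, mem_Icc, abs_le]
  have hQn : Ψ ⁻¹' Qnu = Icc (-(ℓ/2)) (ℓ/2) ×ˢ Icc (-(ℓ/2)) (ℓ/2) := by
    ext p
    simp only [mem_preimage, Qnu, mem_setOf_eq, hin1 p, hin2 p, Set.mem_prod, mem_Icc, abs_le]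
  -- transfer of integrals
  have htrans : ∀ (S : Set (EuclideanSpace ℝ (Fin 2))) (f : EuclideanSpace ℝ (Fin 2) → ℝ),
      (∫ x in S, f x) = ∫ p in Ψ ⁻¹' S, f (Ψ p) :=
    fun S f => (hΨmp.setIntegral_preimage_emb Ψ.measurableEmbedding f S).symm
  -- the linear coordinate map
  set ψL : ℝ × ℝ →L[ℝ] EuclideanSpace ℝ (Fin 2) :=
    (ContinuousLinearMap.fst ℝ ℝ ℝ).smulRight ν +
      (ContinuousLinearMap.snd ℝ ℝ ℝ).smulRight νp with hψLdef
  have hψL : ∀ p : ℝ × ℝ, ψL p = p.1 • ν + p.2 • νp := by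
    intro p
    rw [hψLdef]
    simp [ContinuousLinearMap.smulRight_apply]
  have hΨL : ∀ p, Ψ p = ψL p := fun p => by rw [hΨ p, hψL p]
  have hψ10 : ψL (1, 0) = ν := by rw [hψL]; simp
  have hψ01 : ψL (0, 1) = νp := by rw [hψL]; simp
  set v : ℝ × ℝ → ℝ := fun p => u (Ψ p) with hvdef
  set Dv : ℝ × ℝ → (ℝ × ℝ →L[ℝ] ℝ) := fun p => (Du (Ψ p)).comp ψL with hDvdef
  set w : ℝ × ℝ → ℝ := fun p => ‖Du (Ψ p)‖ with hwdef
  have hvfun : v = fun p => u (ψL p) := funext fun p => by rw [hvdef]; simp only; rw [hΨL p]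
  have hmem : ∀ p : ℝ × ℝ, p ∈ Icc (-ℓ) ℓ ×ˢ Icc (-(ℓ/2)) (ℓ/2) → Ψ p ∈ Qstar := by
    intro p hp
    rw [← hQs] at hp
    exact hp
  have hder' : ∀ p ∈ Icc (-ℓ) ℓ ×ˢ Icc (-(ℓ/2)) (ℓ/2), HasFDerivAt v (Dv p) p := by
    intro p hp
    have h1 : HasFDerivAt u (Du (Ψ p)) (Ψ p) := hder _ (hmem p hp)
    rw [hΨL p] at h1
    have h3 := h1.comp p ψL.hasFDerivAt
    rw [hvfun, hDvdef]
    simp only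
    rw [hΨL p]
    exact h3
  have hw1' : ∀ p ∈ Icc (-ℓ) ℓ ×ˢ Icc (-(ℓ/2)) (ℓ/2), |Dv p (1, 0)| ≤ w p := by
    intro p _
    rw [hDvdef, hwdef]
    simp only [ContinuousLinearMap.comp_apply, hψ10]
    calc |Du (Ψ p) ν| = ‖Du (Ψ p) ν‖ := (Real.norm_eq_abs _).symm
    _ ≤ ‖Du (Ψ p)‖ * ‖ν‖ := (Du (Ψ p)).le_opNorm ν
    _ = ‖Du (Ψ p)‖ := by rw [hν, mul_one]
  have hw2' : ∀ p ∈ Icc (-ℓ) ℓ ×ˢ Icc (-(ℓ/2)) (ℓ/2), |Dv p (0, 1)| ≤ w p := by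
    intro p _
    rw [hDvdef, hwdef]
    simp only [ContinuousLinearMap.comp_apply, hψ01]
    calc |Du (Ψ p) νp| = ‖Du (Ψ p) νp‖ := (Real.norm_eq_abs _).symm
    _ ≤ ‖Du (Ψ p)‖ * ‖νp‖ := (Du (Ψ p)).le_opNorm νp
    _ = ‖Du (Ψ p)‖ := by rw [hνp, mul_one]
  have hwint' : IntegrableOn w (Icc (-ℓ) ℓ ×ˢ Icc (-(ℓ/2)) (ℓ/2)) := by
    have hmp2 : MeasurePreserving Ψ (volume.restrict (Ψ ⁻¹' Qstar)) (volume.restrict Qstar) :=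
      hΨmp.restrict_preimage_emb Ψ.measurableEmbedding Qstar
    have := (hmp2.integrable_comp_emb Ψ.measurableEmbedding).2 hint
    rw [hQs] at this
    exact this
  obtain ⟨h, hmono, hL2, hbar, hbarle⟩ :=
    key ℓ hℓ v Dv w hder' hw1' hw2' hwint'
  have T1 : (∫ x in Qnu, (u x - h ⟪x, ν⟫) ^ 2) =
      ∫ p in Icc (-(ℓ/2)) (ℓ/2) ×ˢ Icc (-(ℓ/2)) (ℓ/2), (v p - h p.1) ^ 2 := by
    rw [htrans Qnu (fun x => (u x - h ⟪x, ν⟫) ^ 2), hQn]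
    refine setIntegral_congr_fun (measurableSet_Icc.prod measurableSet_Icc) ?_
    intro p _
    simp only [hvdef]
    rw [hin1 p]
  have T2 : (∫ x in Qstar, (|Du x νp| + max (-(Du x ν)) 0)) =
      ∫ p in Icc (-ℓ) ℓ ×ˢ Icc (-(ℓ/2)) (ℓ/2), (|Dv p (0, 1)| + max (-(Dv p (1, 0))) 0) := by
    rw [htrans Qstar (fun x => (|Du x νp| + max (-(Du x ν)) 0)), hQs]
    refine setIntegral_congr_fun (measurableSet_Icc.prod measurableSet_Icc) ?_
    intro p _
    simp only [hDvdef, ContinuousLinearMap.comp_apply, hψ01, hψ10]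
  have T3 : (∫ x in Qstar, ‖Du x‖) =
      ∫ p in Icc (-ℓ) ℓ ×ˢ Icc (-(ℓ/2)) (ℓ/2), w p := by
    rw [htrans Qstar (fun x => ‖Du x‖), hQs]
  refine ⟨h, hmono, ?_, hbar, ?_⟩
  · rw [T1, T2, T3]
    exact hL2
  · intro x hx
    have hx1 : |⟪x, ν⟫| ≤ ℓ / 2 := hx.1
    have ht : ⟪x, ν⟫ ∈ Icc (-(ℓ/2)) (ℓ/2) := by
      rw [mem_Icc]
      have := abs_le.1 hx1
      constructor <;> linarith [this.1, this.2]
    rw [T3]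
    exact hbarle _ ht
end
end

section
/- Let u_k : (0,3) → ℝ² be defined by u_k(x) = λ(x)·(1, 1/k) where λ(x) = 0 on (0,1], λ(x) = 1 on (1,2], λ(x) = k on (2,3). Then ∫_0^3 dist(u_k, ℤ²) dx ≤ 1/k, but for every one-dimensional integer-valued function u* of the form u*(x) = a* λ*(x) + b* with a*, b* ∈ ℤ², λ* : ℝ → ℤ, one has ‖u_k − u*‖_{L¹((0,3))} ≥ 1/2. -/
open MeasureTheory

noncomputable section

/-- The scalar profile `λ` of the counterexample: `0` on `(0,1]`, `1` on `(1,2]`, `k` on `(2,3)`. -/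
def lamfun (k : ℕ) (x : ℝ) : ℝ := if x ≤ 1 then 0 else if x ≤ 2 then 1 else (k : ℝ)

/-- The counterexample `u_k(x) = λ(x)·(1, 1/k)`. -/
def uk (k : ℕ) (x : ℝ) : Fin 2 → ℝ :=
  fun i => lamfun k x * (if i = 0 then 1 else ((k : ℝ))⁻¹)

lemma enorm'_nonneg {N : ℕ} (v : Fin N → ℝ) : 0 ≤ enorm' v := Real.sqrt_nonneg _

lemma abs_le_enorm' {N : ℕ} (v : Fin N → ℝ) (i : Fin N) : |v i| ≤ enorm' v := by
  rw [enorm', ← Real.sqrt_sq_eq_abs]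
  exact Real.sqrt_le_sqrt (Finset.single_le_sum (f := fun j => v j ^ 2)
    (fun j _ => sq_nonneg _) (Finset.mem_univ i))

lemma enorm'_le_sum (v : Fin 2 → ℝ) : enorm' v ≤ |v 0| + |v 1| := by
  rw [enorm', Fin.sum_univ_two]
  have h : v 0 ^ 2 + v 1 ^ 2 ≤ (|v 0| + |v 1|) ^ 2 := by
    nlinarith [sq_abs (v 0), sq_abs (v 1), mul_nonneg (abs_nonneg (v 0)) (abs_nonneg (v 1))]
  calc Real.sqrt (v 0 ^ 2 + v 1 ^ 2) ≤ Real.sqrt ((|v 0| + |v 1|) ^ 2) := Real.sqrt_le_sqrt h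
  _ = |v 0| + |v 1| := Real.sqrt_sq (by positivity)

lemma distZ_nonneg {N : ℕ} (v : Fin N → ℝ) : 0 ≤ distZ v :=
  Real.iInf_nonneg fun _ => enorm'_nonneg _

lemma distZ_le {N : ℕ} (v : Fin N → ℝ) (z : Fin N → ℤ) :
    distZ v ≤ enorm' (fun i => v i - (z i : ℝ)) :=
  ciInf_le ⟨0, by rintro y ⟨z, rfl⟩; exact enorm'_nonneg _⟩ z

lemma lamfun_eq0 {k : ℕ} {x : ℝ} (h : x ≤ 1) : lamfun k x = 0 := by simp [lamfun, h]

lemma lamfun_eq1 {k : ℕ} {x : ℝ} (h1 : 1 < x) (h2 : x ≤ 2) : lamfun k x = 1 := by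
  simp [lamfun, not_le.mpr h1, h2]

lemma lamfun_eqk {k : ℕ} {x : ℝ} (h : 2 < x) : lamfun k x = (k : ℝ) := by
  simp [lamfun, not_le.mpr h, not_le.mpr (lt_trans one_lt_two h)]

lemma int_dist {m n : ℤ} (h : m ≠ n) : (1 : ℝ) ≤ |(m : ℝ) - (n : ℝ)| := by
  have h1 : 1 ≤ |m - n| := Int.one_le_abs (sub_ne_zero.mpr h)
  rw [show (m : ℝ) - n = ((m - n : ℤ) : ℝ) by push_cast; ring, ← Int.cast_abs]
  exact_mod_cast h1

/-- The three points `(0,0)`, `(1,0)`, `(k,1)` cannot all lie on one integer line `t ↦ t a + b`. -/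
lemma not_all_three (k : ℕ) (a b : Fin 2 → ℤ)
    (h1 : ∃ t : ℤ, ∀ i, t * a i + b i = 0)
    (h2 : ∃ t : ℤ, ∀ i, t * a i + b i = if i = 0 then 1 else 0) :
    ¬ ∃ t : ℤ, ∀ i, t * a i + b i = if i = 0 then (k : ℤ) else 1 := by
  obtain ⟨t1, h1⟩ := h1
  obtain ⟨t2, h2⟩ := h2
  rintro ⟨t3, h3⟩
  have e10 := h1 0
  have e11 := h1 1
  have e20 := h2 0
  have e21 := h2 1
  have e31 := h3 1
  simp only [if_pos, if_neg (by decide : ¬(1 : Fin 2) = 0)] at e20 e21 e31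
  have ha1 : a 1 ≠ 0 := by
    intro h
    rw [h] at e11 e31
    omega
  have h0 : (t2 - t1) * a 1 = 0 := by linear_combination e21 - e11
  rcases mul_eq_zero.mp h0 with h0 | h0
  · have ht : t2 = t1 := by omega
    rw [ht] at e20
    rw [e10] at e20
    exact one_ne_zero e20.symm
  · exact ha1 h0

lemma measurable_lamfun (k : ℕ) : Measurable (lamfun k) := by
  unfold lamfun
  apply Measurable.ite measurableSet_Iic measurable_const
  exact Measurable.ite measurableSet_Iic measurable_const measurable_const

/-- `∫₀³ dist(u_k, ℤ²) ≤ 1/k`, but for every integer one-dimensional function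
`u*(x) = a* λ*(x) + b*` (with `a*, b* ∈ ℤ²`, `λ* : ℝ → ℤ` bounded measurable) one has
`‖u_k - u*‖_{L¹((0,3))} ≥ 1/2`. -/
theorem stmt16 (k : ℕ) (hk : 2 ≤ k) :
    (∫ x in Set.Ioo (0 : ℝ) 3, distZ (uk k x)) ≤ 1 / k ∧
    ∀ (astar bstar : Fin 2 → ℤ) (lamstar : ℝ → ℤ), Measurable lamstar →
      (∃ Cb : ℝ, ∀ x, |(lamstar x : ℝ)| ≤ Cb) →
      1 / 2 ≤ ∫ x in Set.Ioo (0 : ℝ) 3,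
        enorm' (fun i => uk k x i - ((lamstar x * astar i + bstar i : ℤ) : ℝ)) := by
  have hkpos : (0 : ℝ) < k := by positivity
  have hk0 : (k : ℝ) ≠ 0 := ne_of_gt hkpos
  constructor
  · -- Part 1
    have hle : ∫ x in Set.Ioo (0:ℝ) 3, distZ (uk k x) ≤
        ∫ x in Set.Ioo (0:ℝ) 3, (Set.Ioc (1:ℝ) 2).indicator (fun _ => 1 / (k:ℝ)) x := by
      apply integral_mono_of_nonneg
      · exact Filter.Eventually.of_forall fun x => distZ_nonneg _
      · exact ((integrableOn_const_iff).mpr (Or.inr (by simp))).indicator measurableSet_Ioc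
      · refine Filter.Eventually.of_forall fun x => ?_
        by_cases hx1 : x ≤ 1
        · have h0 : distZ (uk k x) ≤ enorm' (fun i => uk k x i - ((0 : ℤ) : ℝ)) :=
            distZ_le _ (fun _ => 0)
          have : enorm' (fun i => uk k x i - ((0 : ℤ) : ℝ)) = 0 := by
            simp [enorm', uk, lamfun_eq0 (k := k) hx1]
          rw [this] at h0
          exact h0.trans (Set.indicator_nonneg (fun _ _ => by positivity) x)
        · push_neg at hx1
          by_cases hx2 : x ≤ 2
          · have h0 : distZ (uk k x) ≤
                enorm' (fun i => uk k x i - ((if i = 0 then (1:ℤ) else 0 : ℤ) : ℝ)) :=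
              distZ_le _ _
            have he : enorm' (fun i => uk k x i - ((if i = 0 then (1:ℤ) else 0 : ℤ) : ℝ))
                = 1 / (k : ℝ) := by
              rw [enorm', Fin.sum_univ_two]
              simp only [uk, lamfun_eq1 hx1 hx2]
              norm_num
            have hmem : x ∈ Set.Ioc (1:ℝ) 2 := ⟨hx1, hx2⟩
            rw [Set.indicator_of_mem hmem]
            rw [he] at h0; exact h0
          · push_neg at hx2
            have h0 : distZ (uk k x) ≤
                enorm' (fun i => uk k x i - ((if i = 0 then (k:ℤ) else 1 : ℤ) : ℝ)) :=
              distZ_le _ _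
            have he : enorm' (fun i => uk k x i - ((if i = 0 then (k:ℤ) else 1 : ℤ) : ℝ))
                = 0 := by
              rw [enorm', Fin.sum_univ_two]
              simp only [uk, lamfun_eqk hx2]
              norm_num [hk0]
            rw [he] at h0
            refine h0.trans ?_
            exact Set.indicator_nonneg (fun _ _ => by positivity) x
    refine hle.trans ?_
    rw [setIntegral_indicator measurableSet_Ioc]
    have hseq : Set.Ioo (0:ℝ) 3 ∩ Set.Ioc 1 2 = Set.Ioc (1:ℝ) 2 := by
      apply Set.inter_eq_self_of_subset_right
      intro y hy
      exact ⟨lt_trans one_pos hy.1, lt_of_le_of_lt hy.2 (by norm_num)⟩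
    rw [hseq, setIntegral_const, Real.volume_real_Ioc]
    norm_num
  · -- Part 2
    intro astar bstar lamstar hmeas ⟨Cb, hCb⟩
    set F := fun x => enorm' (fun i => uk k x i - ((lamstar x * astar i + bstar i : ℤ) : ℝ))
      with hFdef
    have hk1 : (1:ℝ) ≤ (k:ℝ) := by exact_mod_cast le_trans one_le_two hk
    have hk2 : (2:ℝ) ≤ (k:ℝ) := by exact_mod_cast hk
    have hmeasF : Measurable F := by
      rw [hFdef]
      simp only [enorm']
      apply Measurable.sqrt
      apply Finset.measurable_sum
      intro i _
      apply Measurable.pow_const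
      apply Measurable.sub
      · exact (measurable_lamfun k).mul_const _
      · exact Measurable.comp (g := fun n : ℤ => ((n * astar i + bstar i : ℤ) : ℝ))
          (fun _ _ => trivial) hmeas
    have hukbd : ∀ (x : ℝ) (i : Fin 2), |uk k x i| ≤ (k:ℝ) := by
      intro x i
      rw [uk, abs_mul]
      have h1 : |lamfun k x| ≤ (k:ℝ) := by
        unfold lamfun
        split_ifs with h1 h2
        · simpa using hkpos.le
        · rw [abs_one]; exact hk1
        · rw [abs_of_nonneg hkpos.le]
      have h2 : |(if i = 0 then (1:ℝ) else (k:ℝ)⁻¹)| ≤ 1 := by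
        split_ifs with h
        · simp
        · rw [abs_of_nonneg (by positivity)]
          exact inv_le_one_of_one_le₀ hk1
      calc |lamfun k x| * |if i = 0 then (1:ℝ) else (k:ℝ)⁻¹| ≤ (k:ℝ) * 1 :=
            mul_le_mul h1 h2 (abs_nonneg _) hkpos.le
        _ = (k:ℝ) := mul_one _
    have hvbd : ∀ (x : ℝ) (i : Fin 2),
        |((lamstar x * astar i + bstar i : ℤ) : ℝ)| ≤ Cb * |(astar i : ℝ)| + |(bstar i : ℝ)| := by
      intro x i
      push_cast
      calc |(lamstar x : ℝ) * (astar i : ℝ) + (bstar i : ℝ)|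
          ≤ |(lamstar x : ℝ)| * |(astar i : ℝ)| + |(bstar i : ℝ)| := by
            rw [← abs_mul]; exact abs_add_le _ _
        _ ≤ Cb * |(astar i : ℝ)| + |(bstar i : ℝ)| := by
            gcongr
            exact hCb x
    set C : ℝ := 2*(k:ℝ) + (Cb*|(astar 0 : ℝ)| + |(bstar 0 : ℝ)|) + (Cb*|(astar 1 : ℝ)| + |(bstar 1 : ℝ)|) with hC
    have hFbd : ∀ x, ‖F x‖ ≤ C := by
      intro x
      rw [Real.norm_eq_abs, abs_of_nonneg (enorm'_nonneg _)]
      refine (enorm'_le_sum _).trans ?_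
      have e0 : |uk k x 0 - ((lamstar x * astar 0 + bstar 0 : ℤ) : ℝ)|
          ≤ |uk k x 0| + |((lamstar x * astar 0 + bstar 0 : ℤ) : ℝ)| := abs_sub _ _
      have e1 : |uk k x 1 - ((lamstar x * astar 1 + bstar 1 : ℤ) : ℝ)|
          ≤ |uk k x 1| + |((lamstar x * astar 1 + bstar 1 : ℤ) : ℝ)| := abs_sub _ _
      have := hukbd x 0
      have := hukbd x 1
      have := hvbd x 0
      have := hvbd x 1
      rw [hC]
      linarith
    have hFint : IntegrableOn F (Set.Ioo (0:ℝ) 3) :=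
      Integrable.mono' ((integrableOn_const_iff).mpr (Or.inr (by simp)))
        hmeasF.aestronglyMeasurable (Filter.Eventually.of_forall hFbd)
    have hFnn : ∀ x, 0 ≤ F x := fun x => enorm'_nonneg _
    have key : ∀ I : Set ℝ, MeasurableSet I → I ⊆ Set.Ioo 0 3 → volume I = 1 →
        (∀ x ∈ I, 1/2 ≤ F x) → (1:ℝ)/2 ≤ ∫ x in Set.Ioo (0:ℝ) 3, F x := by
      intro I hImeas hIsub hIvol hIlb
      have h1 : (1:ℝ)/2 = ∫ _x in I, (1/2 : ℝ) := by
        rw [setIntegral_const, measureReal_def, hIvol]; simp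
      rw [h1]
      have h2 : ∫ _x in I, (1/2:ℝ) ≤ ∫ x in I, F x :=
        setIntegral_mono_on
          ((integrableOn_const_iff).mpr (Or.inr (by rw [hIvol]; exact ENNReal.one_lt_top)))
          (hFint.mono_set hIsub) hImeas hIlb
      exact h2.trans (setIntegral_mono_set hFint (Filter.Eventually.of_forall hFnn)
        (HasSubset.Subset.eventuallyLE hIsub))
    by_cases hP1 : ∃ t : ℤ, ∀ i, t * astar i + bstar i = 0
    · by_cases hP2 : ∃ t : ℤ, ∀ i, t * astar i + bstar i = if i = 0 then 1 else 0
      · -- the third point (k,1) is never attained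
        have hP3 := not_all_three k astar bstar hP1 hP2
        push_neg at hP3
        apply key (Set.Ioo 2 3) measurableSet_Ioo
          (fun y hy => ⟨lt_trans two_pos hy.1, hy.2⟩)
          (by norm_num [Real.volume_Ioo])
        intro x hx
        obtain ⟨i, hi⟩ := hP3 (lamstar x)
        have hui : uk k x i = ((if i = 0 then (k:ℤ) else 1 : ℤ) : ℝ) := by
          fin_cases i
          · simp [uk, lamfun_eqk hx.1]
          · simp [uk, lamfun_eqk hx.1, mul_inv_cancel₀ hk0]
        have h1 : (1:ℝ) ≤ |uk k x i - ((lamstar x * astar i + bstar i : ℤ) : ℝ)| := by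
          rw [hui]; exact int_dist (Ne.symm hi)
        calc (1:ℝ)/2 ≤ 1 := by norm_num
          _ ≤ |uk k x i - ((lamstar x * astar i + bstar i : ℤ) : ℝ)| := h1
          _ ≤ F x := by rw [hFdef]; exact abs_le_enorm' (fun j => uk k x j - ((lamstar x * astar j + bstar j : ℤ) : ℝ)) i
      · -- the second point (1,0) is never attained
        push_neg at hP2
        apply key (Set.Ioc 1 2) measurableSet_Ioc
          (fun y hy => ⟨lt_trans one_pos hy.1, lt_of_le_of_lt hy.2 (by norm_num)⟩)
          (by norm_num [Real.volume_Ioc])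
        intro x hx
        obtain ⟨i, hi⟩ := hP2 (lamstar x)
        fin_cases i
        · simp only [if_pos rfl] at hi
          have hui : uk k x 0 = ((1:ℤ) : ℝ) := by
            simp [uk, lamfun_eq1 hx.1 hx.2]
          have h1 : (1:ℝ) ≤ |uk k x 0 - ((lamstar x * astar 0 + bstar 0 : ℤ) : ℝ)| := by
            rw [hui]; exact int_dist (Ne.symm hi)
          calc (1:ℝ)/2 ≤ 1 := by norm_num
            _ ≤ |uk k x 0 - ((lamstar x * astar 0 + bstar 0 : ℤ) : ℝ)| := h1
            _ ≤ F x := by rw [hFdef]; exact abs_le_enorm' (fun j => uk k x j - ((lamstar x * astar j + bstar j : ℤ) : ℝ)) 0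
        · simp only [if_neg (by decide : ¬(1 : Fin 2) = 0)] at hi
          have hui : uk k x 1 = (k:ℝ)⁻¹ := by
            simp [uk, lamfun_eq1 hx.1 hx.2]
          have h1 : (1:ℝ) ≤ |((lamstar x * astar 1 + bstar 1 : ℤ) : ℝ)| := by
            exact_mod_cast Int.one_le_abs hi
          have h2 : |(k:ℝ)⁻¹| ≤ 1/2 := by
            rw [abs_of_nonneg (by positivity)]
            rw [show (1:ℝ)/2 = (2:ℝ)⁻¹ by norm_num]
            exact inv_anti₀ two_pos hk2
          have h3 : |((lamstar x * astar 1 + bstar 1 : ℤ) : ℝ)| - |(k:ℝ)⁻¹|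
              ≤ |uk k x 1 - ((lamstar x * astar 1 + bstar 1 : ℤ) : ℝ)| := by
            rw [hui, abs_sub_comm]
            exact abs_sub_abs_le_abs_sub _ _
          calc (1:ℝ)/2 ≤ |uk k x 1 - ((lamstar x * astar 1 + bstar 1 : ℤ) : ℝ)| := by linarith
            _ ≤ F x := by rw [hFdef]; exact abs_le_enorm' (fun j => uk k x j - ((lamstar x * astar j + bstar j : ℤ) : ℝ)) 1
    · -- the first point (0,0) is never attained
      push_neg at hP1
      apply key (Set.Ioc 0 1) measurableSet_Ioc
        (fun y hy => ⟨hy.1, lt_of_le_of_lt hy.2 (by norm_num)⟩)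
        (by norm_num [Real.volume_Ioc])
      intro x hx
      obtain ⟨i, hi⟩ := hP1 (lamstar x)
      have hui : uk k x i = ((0:ℤ) : ℝ) := by
        simp [uk, lamfun_eq0 hx.2]
      have h1 : (1:ℝ) ≤ |uk k x i - ((lamstar x * astar i + bstar i : ℤ) : ℝ)| := by
        rw [hui]; exact int_dist (Ne.symm hi)
      calc (1:ℝ)/2 ≤ 1 := by norm_num
        _ ≤ |uk k x i - ((lamstar x * astar i + bstar i : ℤ) : ℝ)| := h1
        _ ≤ F x := by rw [hFdef]; exact abs_le_enorm' (fun j => uk k x j - ((lamstar x * astar j + bstar j : ℤ) : ℝ)) i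
end
end
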